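/- arXiv:2105.15032 — 8 statements merged into one kernel-verified Lean document; each statement's English description precedes it below -/
import Mathlib

section
/- Consider the fixed-price bilateral trade mechanism that trades the item if and only if v_b ≥ p ≥ v_s, where the realized welfare equals v_b if a trade occurs and v_s otherwise. With the balanced price p = (1/2)·E[max(v_s, v_b)], the expected welfare of this mechanism is at least (1/2)·E[max(v_s, v_b)]. -/
open MeasureTheory ProbabilityTheory
open scoped Classical

/-- **Bilateral trade via a balanced price.**
Let `vs` (the seller's value) and `vb` (the buyer's value) be independent, nonnegative,
integrable real random variables and let `p = (1/2) · E[max(vs, vb)]` be the balanced price.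
The fixed-price mechanism trades the item iff `vb ≥ p ≥ vs`; its realized welfare is `vb`
if a trade occurs and `vs` otherwise.  Its expected welfare is at least
`(1/2) · E[max(vs, vb)]`. -/
theorem bilateral_trade_balanced_price_welfare
    {Ω : Type*} [MeasurableSpace Ω] (μ : Measure Ω) [IsProbabilityMeasure μ]
    (vs vb : Ω → ℝ)
    (hvs_meas : Measurable vs) (hvb_meas : Measurable vb)
    (hvs_nonneg : ∀ ω, 0 ≤ vs ω) (hvb_nonneg : ∀ ω, 0 ≤ vb ω)
    (hvs_int : Integrable vs μ) (hvb_int : Integrable vb μ)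
    (hindep : IndepFun vs vb μ)
    (p : ℝ) (hp : p = (1 / 2) * ∫ ω, max (vs ω) (vb ω) ∂μ) :
    (1 / 2) * (∫ ω, max (vs ω) (vb ω) ∂μ) ≤
      ∫ ω, (if vb ω ≥ p ∧ p ≥ vs ω then vb ω else vs ω) ∂μ := by
  have hmax_int : Integrable (fun ω => max (vs ω) (vb ω)) μ := hvs_int.sup hvb_int
  set W : Ω → ℝ := fun ω => if vb ω ≥ p ∧ p ≥ vs ω then vb ω else vs ω with hW
  have hW_meas : Measurable W := by
    apply Measurable.ite _ hvb_meas hvs_meas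
    exact (measurableSet_le (measurable_const) hvb_meas).inter
      (measurableSet_le hvs_meas measurable_const)
  have hW_le : ∀ ω, |W ω| ≤ max (vs ω) (vb ω) := by
    intro ω
    simp only [hW]
    split_ifs with h
    · rw [abs_of_nonneg (hvb_nonneg ω)]; exact le_max_right _ _
    · rw [abs_of_nonneg (hvs_nonneg ω)]; exact le_max_left _ _
  have hW_int : Integrable W μ :=
    hmax_int.mono' hW_meas.aestronglyMeasurable (ae_of_all _ hW_le)
  have hmax_nonneg : ∀ ω, (0:ℝ) ≤ max (vs ω) (vb ω) := fun ω =>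
    le_trans (hvs_nonneg ω) (le_max_left _ _)
  have hM_nonneg : 0 ≤ ∫ ω, max (vs ω) (vb ω) ∂μ := integral_nonneg hmax_nonneg
  have hp_nonneg : 0 ≤ p := by rw [hp]; linarith
  rcases eq_or_lt_of_le hp_nonneg with hp0 | hp_pos
  · have h0 : (1/2 : ℝ) * ∫ ω, max (vs ω) (vb ω) ∂μ = 0 := by rw [← hp, ← hp0]
    rw [h0]
    apply integral_nonneg
    intro ω
    simp only [hW]
    split_ifs with h
    · exact hvb_nonneg ω
    · exact hvs_nonneg ω
  -- p > 0 from now on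
  set f : ℝ → ℝ := fun x => if x ≤ p then (1:ℝ) else 0 with hf
  set g : ℝ → ℝ := fun x => max (x - p) 0 with hg
  have hf_meas : Measurable f := by
    apply Measurable.ite measurableSet_Iic measurable_const measurable_const
  have hg_meas : Measurable g := (measurable_id.sub measurable_const).max measurable_const
  have hf01 : ∀ x, 0 ≤ f x ∧ f x ≤ 1 := by
    intro x; simp only [hf]; split_ifs <;> norm_num
  have hfvs_int : Integrable (fun ω => f (vs ω)) μ := by
    refine Integrable.mono' (g := fun _ => (1:ℝ)) (integrable_const 1) ?_ ?_
    · exact (hf_meas.comp hvs_meas).aestronglyMeasurable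
    · filter_upwards with ω
      rw [Real.norm_eq_abs, abs_of_nonneg (hf01 (vs ω)).1]
      exact (hf01 (vs ω)).2
  have hgvb_le : ∀ ω, |g (vb ω)| ≤ |vb ω| := by
    intro ω
    rw [abs_of_nonneg (le_max_right _ _), abs_of_nonneg (hvb_nonneg ω)]
    exact max_le (by linarith [hvb_nonneg ω]) (hvb_nonneg ω)
  have hgvb_int : Integrable (fun ω => g (vb ω)) μ := by
    refine Integrable.mono' hvb_int.abs ?_ (ae_of_all _ ?_)
    · exact (hg_meas.comp hvb_meas).aestronglyMeasurable
    · intro ω; rw [Real.norm_eq_abs]; exact hgvb_le ω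
  have hpvs_int : Integrable (fun ω => max (p - vs ω) 0) μ := by
    refine Integrable.mono' (g := fun _ => p) (integrable_const p) ?_ ?_
    · exact ((measurable_const.sub hvs_meas).max measurable_const).aestronglyMeasurable
    · filter_upwards with ω
      rw [Real.norm_eq_abs, abs_of_nonneg (le_max_right _ _)]
      exact max_le (by linarith [hvs_nonneg ω]) hp_nonneg
  set s : ℝ := ∫ ω, vs ω ∂μ with hs
  set X : ℝ := ∫ ω, g (vb ω) ∂μ with hX
  set Y : ℝ := ∫ ω, max (p - vs ω) 0 ∂μ with hY
  set q : ℝ := ∫ ω, f (vs ω) ∂μ with hq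
  have hX_nonneg : 0 ≤ X := integral_nonneg fun ω => le_max_right _ _
  have hY_nonneg : 0 ≤ Y := integral_nonneg fun ω => le_max_right _ _
  have h1int : Integrable (fun ω => vs ω + g (vb ω)) μ := hvs_int.add hgvb_int
  -- Fact 1 : 2p ≤ s + X + Y
  have fact1 : 2 * p ≤ s + X + Y := by
    have hpt : ∀ ω, max (vs ω) (vb ω) ≤ vs ω + g (vb ω) + max (p - vs ω) 0 := by
      intro ω
      apply max_le
      · have h1 : (0:ℝ) ≤ g (vb ω) := le_max_right _ _
        have h2 : (0:ℝ) ≤ max (p - vs ω) 0 := le_max_right _ _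
        linarith
      · have h1 : vb ω - p ≤ g (vb ω) := le_max_left _ _
        have h2 : p - vs ω ≤ max (p - vs ω) 0 := le_max_left _ _
        linarith
    have hmono := integral_mono hmax_int (h1int.add hpvs_int) hpt
    simp only [Pi.add_apply] at hmono
    rw [integral_add h1int hpvs_int, integral_add hvs_int hgvb_int] at hmono
    have hM : ∫ ω, max (vs ω) (vb ω) ∂μ = 2 * p := by rw [hp]; ring
    rw [hM] at hmono
    linarith
  -- Fact 2 : p ≤ s + Y
  have fact2 : p ≤ s + Y := by
    have hpt : ∀ ω, (fun _ => p) ω ≤ vs ω + max (p - vs ω) 0 := by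
      intro ω
      have h1 : p - vs ω ≤ max (p - vs ω) 0 := le_max_left _ _
      simpa using by linarith
    have hmono := integral_mono (integrable_const p) (hvs_int.add hpvs_int) hpt
    simp only [Pi.add_apply] at hmono
    rw [integral_add hvs_int hpvs_int, integral_const] at hmono
    simpa using hmono
  -- Fact 3 : Y ≤ p * q
  have fact3 : Y ≤ p * q := by
    have hpt : ∀ ω, max (p - vs ω) 0 ≤ p * f (vs ω) := by
      intro ω
      simp only [hf]
      split_ifs with h
      · rw [mul_one]; exact max_le (by linarith [hvs_nonneg ω]) hp_nonneg
      · rw [mul_zero]; exact max_le (by linarith) le_rfl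
    have hmono := integral_mono hpvs_int (hfvs_int.const_mul p) hpt
    rwa [integral_const_mul] at hmono
  -- independence
  have hprod : ∫ ω, f (vs ω) * g (vb ω) ∂μ = q * X := by
    have h := (hindep.comp hf_meas hg_meas).integral_mul_eq_mul_integral hfvs_int.aestronglyMeasurable hgvb_int.aestronglyMeasurable
    simpa [Function.comp, Pi.mul_apply] using h
  have hfg_int : Integrable (fun ω => f (vs ω) * g (vb ω)) μ := by
    refine Integrable.mono' hgvb_int.abs ?_ ?_
    · exact ((hf_meas.comp hvs_meas).mul (hg_meas.comp hvb_meas)).aestronglyMeasurable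
    · filter_upwards with ω
      rw [Real.norm_eq_abs, abs_mul, abs_of_nonneg (hf01 (vs ω)).1]
      have h2 : (0:ℝ) ≤ |g (vb ω)| := abs_nonneg _
      nlinarith [(hf01 (vs ω)).2, (hf01 (vs ω)).1]
  -- Fact 4 : s + q * X ≤ ∫ W
  have fact4 : s + q * X ≤ ∫ ω, W ω ∂μ := by
    have hpt : ∀ ω, vs ω + f (vs ω) * g (vb ω) ≤ W ω := by
      intro ω
      by_cases hA : vs ω ≤ p
      · by_cases hB : p ≤ vb ω
        · have hWeq : W ω = vb ω := if_pos ⟨hB, hA⟩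
          have hfeq : f (vs ω) = 1 := if_pos hA
          have hgeq : g (vb ω) = vb ω - p := max_eq_left (by linarith)
          rw [hWeq, hfeq, hgeq, one_mul]
          linarith
        · push_neg at hB
          have hWeq : W ω = vs ω := if_neg (by rintro ⟨h1, _⟩; exact absurd h1 (not_le.mpr hB))
          have hgeq : g (vb ω) = 0 := max_eq_right (by linarith)
          rw [hWeq, hgeq, mul_zero, add_zero]
      · have hfeq : f (vs ω) = 0 := if_neg hA
        rw [hfeq, zero_mul, add_zero]
        simp only [hW]
        split_ifs with h
        · linarith [h.2, not_le.mp hA]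
        · exact le_rfl
    have hmono := integral_mono (hvs_int.add hfg_int) hW_int hpt
    simp only [Pi.add_apply] at hmono
    rw [integral_add hvs_int hfg_int, hprod] at hmono
    exact hmono
  -- final algebra
  have hhalf : (1/2 : ℝ) * ∫ ω, max (vs ω) (vb ω) ∂μ = p := hp.symm
  rw [hhalf]
  have hq_le_one : q ≤ 1 := by
    have hpt : ∀ ω, f (vs ω) ≤ (fun _ => (1:ℝ)) ω := fun ω => (hf01 (vs ω)).2
    have hmono := integral_mono hfvs_int (integrable_const 1) hpt
    simpa using hmono
  have hqX : (Y / p) * X ≤ q * X := by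
    apply mul_le_mul_of_nonneg_right _ hX_nonneg
    rw [div_le_iff₀ hp_pos]
    nlinarith
  have key : p ≤ s + (Y / p) * X := by
    have hYp : Y ≤ p := le_trans fact3 (by nlinarith)
    have h1 : (0:ℝ) ≤ (s + Y - p) * (p - Y) := mul_nonneg (by linarith) (by linarith)
    have h2 : (0:ℝ) ≤ (s + X + Y - 2*p) * Y := mul_nonneg (by linarith) hY_nonneg
    have hdiv : p - s ≤ Y * X / p := by
      rw [le_div_iff₀ hp_pos]; nlinarith
    have hYX : (Y / p) * X = Y * X / p := by ring
    linarith [hYX ▸ hdiv]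
  calc p ≤ s + (Y / p) * X := key
    _ ≤ s + q * X := by linarith
    _ ≤ ∫ ω, W ω ∂μ := fact4
end

section
/- The expected surplus of the fixed-price bilateral trade mechanism satisfies E[(v_s − p)^+] + P(v_s < p)·E[(v_b − p)^+] ≥ p·P(v_s < p and v_b < p), where x^+ denotes max(x, 0). -/
open MeasureTheory ProbabilityTheory

/-- **Surplus bound for the fixed-price bilateral trade mechanism.**
Let `vs` (the seller's value) and `vb` (the buyer's value) be independent, nonnegative,
integrable real random variables and let `p = (1/2) · E[max(vs, vb)]`.
Then the expected surplus satisfies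
`E[(vs − p)⁺] + P(vs < p) · E[(vb − p)⁺] ≥ p · P(vs < p ∧ vb < p)`. -/
theorem bilateral_trade_surplus_bound
    {Ω : Type*} [MeasurableSpace Ω] (μ : Measure Ω) [IsProbabilityMeasure μ]
    (vs vb : Ω → ℝ)
    (hvs_meas : Measurable vs) (hvb_meas : Measurable vb)
    (hvs_nonneg : ∀ ω, 0 ≤ vs ω) (hvb_nonneg : ∀ ω, 0 ≤ vb ω)
    (hvs_int : Integrable vs μ) (hvb_int : Integrable vb μ)
    (hindep : IndepFun vs vb μ)
    (p : ℝ) (hp : p = (1 / 2) * ∫ ω, max (vs ω) (vb ω) ∂μ) :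
    p * (μ {ω | vs ω < p ∧ vb ω < p}).toReal ≤
      (∫ ω, max (vs ω - p) 0 ∂μ) +
        (μ {ω | vs ω < p}).toReal * ∫ ω, max (vb ω - p) 0 ∂μ := by
  set A := ∫ ω, max (vs ω - p) 0 ∂μ with hA
  set B := ∫ ω, max (vb ω - p) 0 ∂μ with hB
  have hA_int : Integrable (fun ω => max (vs ω - p) 0) μ :=
    (hvs_int.sub (integrable_const p)).pos_part
  have hB_int : Integrable (fun ω => max (vb ω - p) 0) μ :=
    (hvb_int.sub (integrable_const p)).pos_part
  have hA_nonneg : 0 ≤ A := integral_nonneg fun ω => le_max_right _ 0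
  have hB_nonneg : 0 ≤ B := integral_nonneg fun ω => le_max_right _ 0
  have hp_nonneg : 0 ≤ p := by
    rw [hp]
    have : 0 ≤ ∫ ω, max (vs ω) (vb ω) ∂μ :=
      integral_nonneg fun ω => le_trans (hvs_nonneg ω) (le_max_left _ _)
    linarith
  -- pointwise bound
  have hpt : ∀ ω, max (vs ω) (vb ω) ≤ max (vs ω - p) 0 + max (vb ω - p) 0 + p := by
    intro ω
    apply max_le
    · have h1 : vs ω - p ≤ max (vs ω - p) 0 := le_max_left _ _
      have h2 : (0:ℝ) ≤ max (vb ω - p) 0 := le_max_right _ _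
      linarith
    · have h1 : vb ω - p ≤ max (vb ω - p) 0 := le_max_left _ _
      have h2 : (0:ℝ) ≤ max (vs ω - p) 0 := le_max_right _ _
      linarith
  have hmax_int : Integrable (fun ω => max (vs ω) (vb ω)) μ := hvs_int.sup hvb_int
  have hkey : p ≤ A + B := by
    have hmono : ∫ ω, max (vs ω) (vb ω) ∂μ ≤
        ∫ ω, (max (vs ω - p) 0 + max (vb ω - p) 0 + p) ∂μ :=
      integral_mono hmax_int ((hA_int.add hB_int).add (integrable_const p)) hpt
    have heq : ∫ ω, (max (vs ω - p) 0 + max (vb ω - p) 0 + p) ∂μ = A + B + p := by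
      have h1 := integral_add (μ := μ) (hA_int.add hB_int) (integrable_const p)
      simp only [Pi.add_apply] at h1
      rw [h1, integral_add hA_int hB_int, integral_const]
      simp [hA, hB]
    rw [heq] at hmono
    have h2p : 2 * p = ∫ ω, max (vs ω) (vb ω) ∂μ := by rw [hp]; ring
    linarith
  -- independence factors the probability
  have hfact : μ {ω | vs ω < p ∧ vb ω < p} = μ {ω | vs ω < p} * μ {ω | vb ω < p} := by
    have := hindep.measure_inter_preimage_eq_mul (Set.Iio p) (Set.Iio p)
      measurableSet_Iio measurableSet_Iio
    convert this using 2 <;> try (ext ω; simp [Set.mem_preimage])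
    all_goals rfl
  set q := (μ {ω | vs ω < p}).toReal with hq
  set r := (μ {ω | vb ω < p}).toReal with hr
  have hq0 : 0 ≤ q := ENNReal.toReal_nonneg
  have hr0 : 0 ≤ r := ENNReal.toReal_nonneg
  have hq1 : q ≤ 1 := by
    simpa [hq] using ENNReal.toReal_mono ENNReal.one_ne_top (prob_le_one (μ := μ))
  have hr1 : r ≤ 1 := by
    simpa [hr] using ENNReal.toReal_mono ENNReal.one_ne_top (prob_le_one (μ := μ))
  have hjoint : (μ {ω | vs ω < p ∧ vb ω < p}).toReal = q * r := by
    rw [hfact, ENNReal.toReal_mul]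
  rw [hjoint]
  have hqr0 : 0 ≤ q * r := mul_nonneg hq0 hr0
  have hqr1 : q * r ≤ 1 := mul_le_one₀ hq1 hr0 hr1
  have h1 : p * (q * r) ≤ (A + B) * (q * r) := mul_le_mul_of_nonneg_right hkey hqr0
  have h2 : A * (q * r) ≤ A * 1 := mul_le_mul_of_nonneg_left hqr1 hA_nonneg
  have h3 : B * q * r ≤ B * q * 1 := mul_le_mul_of_nonneg_left hr1 (mul_nonneg hB_nonneg hq0)
  nlinarith
end

section
/- Let r ≥ 1, let X ∈ 𝓘 and i ∉ X be such that X ∪ {i} ∈ 𝓘 and |X ∪ {i}| ≤ r. Then f_r(X ∪ {i}) ≤ f_{r−1}(X); equivalently, f_r(X) − f_r(X ∪ {i}) ≥ f_r(X) − f_{r−1}(X). -/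
open Finset

/-- `Y` is feasible for `(X, r)`: it is disjoint from `X`, `X ∪ Y` is independent in the
matroid `M`, and `|X ∪ Y| ≤ r`. -/
def MatroidFeasible {α : Type*} [DecidableEq α] (M : Matroid α) (r : ℕ)
    (X Y : Finset α) : Prop :=
  Disjoint X Y ∧ M.Indep ↑(X ∪ Y) ∧ (X ∪ Y).card ≤ r

/-- `truncOpt M w r X = f_r(X)`: the maximum weight `w(Y)` over all sets `Y` feasible for
`(X, r)`, i.e. the weight of a maximum-weight basis of the matroid contracted by `X` and
truncated at rank `r`. -/
noncomputable def truncOpt {α : Type*} [DecidableEq α] (M : Matroid α) (w : α → ℝ)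
    (r : ℕ) (X : Finset α) : ℝ :=
  sSup {t : ℝ | ∃ Y : Finset α, MatroidFeasible M r X Y ∧ t = ∑ e ∈ Y, w e}

/-- Let `r ≥ 1`, let `X` be independent, `i ∉ X` with `X ∪ {i}` independent and
`|X ∪ {i}| ≤ r`.  Then `f_r(X ∪ {i}) ≤ f_{r−1}(X)`
(equivalently, `f_r(X) − f_r(X ∪ {i}) ≥ f_r(X) − f_{r−1}(X)`). -/
theorem truncOpt_insert_le_truncOpt_pred
    {α : Type*} [DecidableEq α] [Fintype α] (M : Matroid α) (w : α → ℝ)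
    (hw : ∀ e, 0 ≤ w e) (r : ℕ) (hr : 1 ≤ r)
    (X : Finset α) (i : α) (hiX : i ∉ X)
    (hX : M.Indep ↑X) (hXi : M.Indep ↑(insert i X))
    (hcard : (insert i X).card ≤ r) :
    truncOpt M w r (insert i X) ≤ truncOpt M w (r - 1) X := by
  have hbdd : BddAbove {t : ℝ | ∃ Y : Finset α,
      MatroidFeasible M (r - 1) X Y ∧ t = ∑ e ∈ Y, w e} := by
    refine ⟨∑ e ∈ Finset.univ, w e, ?_⟩
    rintro t ⟨Y, _, rfl⟩
    exact Finset.sum_le_sum_of_subset_of_nonneg (Finset.subset_univ Y)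
      (fun e _ _ => hw e)
  apply Real.sSup_le _ _
  · rintro t ⟨Y, ⟨hdisj, hind, hc⟩, rfl⟩
    have hiY : i ∉ Y := by
      have := hdisj
      rw [Finset.disjoint_left] at this
      exact this (Finset.mem_insert_self i X)
    have hfeas : MatroidFeasible M (r - 1) X Y := by
      refine ⟨?_, ?_, ?_⟩
      · rw [Finset.disjoint_left] at hdisj ⊢
        exact fun a ha => hdisj (Finset.mem_insert_of_mem ha)
      · refine hind.subset ?_
        intro a ha
        simp only [Finset.coe_union, Set.mem_union, Finset.mem_coe] at ha ⊢
        rcases ha with h | h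
        · exact Or.inl (Finset.mem_insert_of_mem h)
        · exact Or.inr h
      · have hi' : i ∉ X ∪ Y := by
          simp [hiX, hiY]
        have : (insert i X ∪ Y) = insert i (X ∪ Y) := by
          ext a; simp [Finset.mem_insert, or_assoc]
        rw [this, Finset.card_insert_of_notMem hi'] at hc
        omega
    exact le_csSup hbdd ⟨Y, hfeas, rfl⟩
  · exact le_csSup hbdd ⟨∅, ⟨Finset.disjoint_empty_right X,
      by simpa using hX, by simpa using (Nat.le_sub_one_of_lt
        (lt_of_lt_of_le (Finset.card_lt_card
          (Finset.ssubset_insert hiX)) hcard))⟩, by simp⟩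
end

section
/- Let X ∈ 𝓘 and let r' ≤ r be natural numbers with |X| ≤ r'. Then there exist a set Y_r feasible for (X, r) with w(Y_r) = f_r(X) and a set Y_{r'} feasible for (X, r') with w(Y_{r'}) = f_{r'}(X) such that Y_{r'} ⊆ Y_r. (A maximum-weight basis of the truncation to rank r' can be chosen as a subset of a maximum-weight basis of the truncation to rank r.) -/
open Finset

section Aux

variable {α : Type*} [DecidableEq α] [Fintype α] (M : Matroid α) (w : α → ℝ)

lemma feasSet_finite (r : ℕ) (X : Finset α) :
    {t : ℝ | ∃ Y : Finset α, MatroidFeasible M r X Y ∧ t = ∑ e ∈ Y, w e}.Finite := by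
  apply Set.Finite.subset (Set.finite_range (fun Y : Finset α => ∑ e ∈ Y, w e))
  rintro t ⟨Y, _, rfl⟩
  exact ⟨Y, rfl⟩

lemma feasSet_nonempty (r : ℕ) (X : Finset α) (hX : M.Indep ↑X) (hcard : X.card ≤ r) :
    {t : ℝ | ∃ Y : Finset α, MatroidFeasible M r X Y ∧ t = ∑ e ∈ Y, w e}.Nonempty := by
  refine ⟨∑ e ∈ (∅ : Finset α), w e, ∅, ⟨?_, ?_, ?_⟩, rfl⟩
  · simp
  · simpa using hX
  · simpa using hcard

lemma le_truncOpt {r : ℕ} {X Y : Finset α} (h : MatroidFeasible M r X Y) :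
    (∑ e ∈ Y, w e) ≤ truncOpt M w r X :=
  le_csSup (feasSet_finite M w r X).bddAbove ⟨Y, h, rfl⟩

lemma exists_truncOpt_max (r : ℕ) (X : Finset α) (hX : M.Indep ↑X) (hcard : X.card ≤ r) :
    ∃ Y : Finset α, MatroidFeasible M r X Y ∧ (∑ e ∈ Y, w e) = truncOpt M w r X := by
  have := (feasSet_nonempty M w r X hX hcard).csSup_mem (feasSet_finite M w r X)
  obtain ⟨Y, hY, ht⟩ := this
  exact ⟨Y, hY, ht.symm⟩

/-- Core step: a maximizer for rank `s+1` contains a maximizer for rank `s`. -/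
lemma truncOpt_step (s : ℕ) (X : Finset α) (hX : M.Indep ↑X) (hcard : X.card ≤ s)
    (Y : Finset α) (hY : MatroidFeasible M (s + 1) X Y)
    (hmax : (∑ e ∈ Y, w e) = truncOpt M w (s + 1) X) :
    ∃ Z ⊆ Y, MatroidFeasible M s X Z ∧ (∑ e ∈ Z, w e) = truncOpt M w s X := by
  obtain ⟨hdisj, hindep, hcardY⟩ := hY
  by_cases hle : (X ∪ Y).card ≤ s
  · -- Y itself is feasible for s and optimal
    refine ⟨Y, Finset.Subset.refl Y, ⟨hdisj, hindep, hle⟩, ?_⟩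
    have h1 : (∑ e ∈ Y, w e) ≤ truncOpt M w s X := le_truncOpt M w ⟨hdisj, hindep, hle⟩
    have h2 : truncOpt M w s X ≤ ∑ e ∈ Y, w e := by
      obtain ⟨Y0, hY0, hY0eq⟩ := exists_truncOpt_max M w s X hX hcard
      have : (∑ e ∈ Y0, w e) ≤ truncOpt M w (s + 1) X :=
        le_truncOpt M w ⟨hY0.1, hY0.2.1, hY0.2.2.trans (Nat.le_succ s)⟩
      rw [hY0eq] at this
      exact this.trans hmax.ge
    linarith
  · have hcardXY : (X ∪ Y).card = s + 1 := le_antisymm hcardY (by omega)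
    have hXYcard : X.card + Y.card = s + 1 := by
      rw [← Finset.card_union_of_disjoint hdisj]; exact hcardXY
    have hYne : Y.Nonempty := by
      rw [← Finset.card_pos]; omega
    obtain ⟨e, heY, hemin⟩ := Finset.exists_min_image Y w hYne
    set Z := Y.erase e with hZ
    have hZY : Z ⊆ Y := Finset.erase_subset e Y
    have hdisjZ : Disjoint X Z := hdisj.mono_right hZY
    have hsubXZ : X ∪ Z ⊆ X ∪ Y := Finset.union_subset_union_right hZY
    have hindepZ : M.Indep ↑(X ∪ Z) :=
      hindep.subset (by exact_mod_cast hsubXZ)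
    have hcardZ : (X ∪ Z).card ≤ s := by
      rw [Finset.card_union_of_disjoint hdisjZ, Finset.card_erase_of_mem heY]
      omega
    have hfeasZ : MatroidFeasible M s X Z := ⟨hdisjZ, hindepZ, hcardZ⟩
    have hsumZ : (∑ e' ∈ Z, w e') + w e = ∑ e' ∈ Y, w e' :=
      Finset.sum_erase_add Y w heY
    refine ⟨Z, hZY, hfeasZ, ?_⟩
    have hle1 : (∑ e' ∈ Z, w e') ≤ truncOpt M w s X := le_truncOpt M w hfeasZ
    by_contra hne
    have hlt : (∑ e' ∈ Z, w e') < truncOpt M w s X := lt_of_le_of_ne hle1 hne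
    obtain ⟨Y', hY', hY'eq⟩ := exists_truncOpt_max M w s X hX hcard
    obtain ⟨hdisj', hindep', hcard'⟩ := hY'
    have hltY' : (∑ e' ∈ Z, w e') < ∑ e' ∈ Y', w e' := by rw [hY'eq]; exact hlt
    -- augment X ∪ Y' from X ∪ Y
    have hlt_card : ((X ∪ Y' : Finset α) : Set α).encard < ((X ∪ Y : Finset α) : Set α).encard := by
      rw [Set.encard_coe_eq_coe_finsetCard, Set.encard_coe_eq_coe_finsetCard, hcardXY]
      exact_mod_cast lt_of_le_of_lt hcard' (Nat.lt_succ_self s)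
    obtain ⟨a, haMem, hains⟩ := hindep'.augment hindep hlt_card
    obtain ⟨haXY, haNot⟩ := haMem
    have haX : a ∉ (X : Set α) := fun h => haNot (by simp [h])
    have haY : a ∈ Y := by
      have : a ∈ X ∪ Y := by exact_mod_cast haXY
      rcases Finset.mem_union.mp this with h | h
      · exact absurd (by exact_mod_cast h) haX
      · exact h
    have haY' : a ∉ Y' := fun h => haNot (by simp [h])
    have haXf : a ∉ X := fun h => haX (by exact_mod_cast h)
    -- insert a Y' is feasible for s+1
    have hfeas2 : MatroidFeasible M (s + 1) X (insert a Y') := by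
      refine ⟨?_, ?_, ?_⟩
      · rw [Finset.disjoint_insert_right]
        exact ⟨haXf, hdisj'⟩
      · have : (↑(X ∪ insert a Y') : Set α) = insert a ↑(X ∪ Y') := by
          simp [Finset.union_insert]
        rw [this]; exact hains
      · rw [Finset.union_insert]
        calc (insert a (X ∪ Y')).card ≤ (X ∪ Y').card + 1 := Finset.card_insert_le _ _
          _ ≤ s + 1 := by omega
    have hbig : (∑ e' ∈ insert a Y', w e') ≤ truncOpt M w (s + 1) X := le_truncOpt M w hfeas2
    rw [Finset.sum_insert haY', ← hmax, ← hsumZ] at hbig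
    have hwa : w e ≤ w a := hemin a haY
    linarith

lemma truncOpt_nested_aux (hw : ∀ e, 0 ≤ w e) (r' : ℕ) (X : Finset α) (hX : M.Indep ↑X)
    (hcard : X.card ≤ r') :
    ∀ d : ℕ, ∀ Y : Finset α, MatroidFeasible M (r' + d) X Y →
      (∑ e ∈ Y, w e) = truncOpt M w (r' + d) X →
      ∃ Z ⊆ Y, MatroidFeasible M r' X Z ∧ (∑ e ∈ Z, w e) = truncOpt M w r' X := by
  intro d
  induction d with
  | zero => intro Y hY hYmax; exact ⟨Y, Finset.Subset.refl Y, hY, hYmax⟩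
  | succ n ih =>
    intro Y hY hYmax
    obtain ⟨Z, hZY, hZfeas, hZmax⟩ :=
      truncOpt_step M w (r' + n) X hX (hcard.trans (Nat.le_add_right r' n)) Y hY hYmax
    obtain ⟨Z', hZ'Z, hZ'feas, hZ'max⟩ := ih Z hZfeas hZmax
    exact ⟨Z', hZ'Z.trans hZY, hZ'feas, hZ'max⟩

end Aux

/-- A maximum-weight basis of the truncation to rank `r'` can be chosen as a subset of a
maximum-weight basis of the truncation to rank `r`: for independent `X` with `|X| ≤ r' ≤ r`
there are `Y_r` feasible for `(X, r)` attaining `f_r(X)` and `Y_{r'}` feasible for `(X, r')`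
attaining `f_{r'}(X)` with `Y_{r'} ⊆ Y_r`. -/
theorem truncOpt_nested_maximizers
    {α : Type*} [DecidableEq α] [Fintype α] (M : Matroid α) (w : α → ℝ)
    (hw : ∀ e, 0 ≤ w e) (r r' : ℕ) (hrr : r' ≤ r)
    (X : Finset α) (hX : M.Indep ↑X) (hcard : X.card ≤ r') :
    ∃ Yr Yr' : Finset α,
      MatroidFeasible M r X Yr ∧ (∑ e ∈ Yr, w e) = truncOpt M w r X ∧
      MatroidFeasible M r' X Yr' ∧ (∑ e ∈ Yr', w e) = truncOpt M w r' X ∧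
      Yr' ⊆ Yr := by
  obtain ⟨Y, hY, hYmax⟩ := exists_truncOpt_max M w r X hX (hcard.trans hrr)
  obtain ⟨d, rfl⟩ : ∃ d, r = r' + d := ⟨r - r', by omega⟩
  obtain ⟨Z, hZY, hZfeas, hZmax⟩ := truncOpt_nested_aux M w hw r' X hX hcard d Y hY hYmax
  exact ⟨Y, Z, hY, hYmax, hZfeas, hZmax, hZY⟩
end

section
/- Let A ∈ 𝓘 and let V ⊆ E be disjoint from A with A ∪ V ∈ 𝓘 and |A ∪ V| ≤ r. Then the sum of the marginal losses is bounded by the optimum: ∑_{i∈V} ( f_r(A) − f_r(A ∪ {i}) ) ≤ f_r(A). -/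
open Finset

lemma matroid_aug_chain {α : Type*} [DecidableEq α] (M : Matroid α) :
    ∀ n (I J : Finset α), J.card - I.card ≤ n → M.Indep ↑I → M.Indep ↑J →
      ∃ K : Finset α, I ⊆ K ∧ K ⊆ I ∪ J ∧ M.Indep ↑K ∧ J.card ≤ K.card := by
  intro n
  induction n with
  | zero =>
    intro I J h hI _
    exact ⟨I, Finset.Subset.refl I, Finset.subset_union_left, hI,
      Nat.sub_eq_zero_iff_le.mp (Nat.le_zero.mp h)⟩
  | succ n ih =>
    intro I J h hI hJ
    by_cases hle : J.card ≤ I.card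
    · exact ⟨I, Finset.Subset.refl I, Finset.subset_union_left, hI, hle⟩
    · push_neg at hle
      have hlt : (↑I : Set α).encard < (↑J : Set α).encard := by
        rw [Set.encard_coe_eq_coe_finsetCard, Set.encard_coe_eq_coe_finsetCard]
        exact_mod_cast hle
      obtain ⟨e, he, hind⟩ := hI.augment hJ hlt
      have heJ : e ∈ J := by simpa using he.1
      have heI : e ∉ I := by simpa using he.2
      have hind' : M.Indep ↑(insert e I) := by simpa using hind
      obtain ⟨K, h1, h2, h3, h4⟩ := ih (insert e I) J
        (by rw [Finset.card_insert_of_notMem heI]; omega) hind' hJ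
      refine ⟨K, (Finset.subset_insert _ _).trans h1, h2.trans ?_, h3, h4⟩
      intro x hx
      rcases Finset.mem_union.mp hx with hx | hx
      · rcases Finset.mem_insert.mp hx with rfl | hx
        · exact Finset.mem_union_right _ heJ
        · exact Finset.mem_union_left _ hx
      · exact Finset.mem_union_right _ hx

/-- The sum of marginal losses is bounded by the optimum: for independent `A` and `V`
disjoint from `A` with `A ∪ V` independent and `|A ∪ V| ≤ r`,
`∑_{i ∈ V} (f_r(A) − f_r(A ∪ {i})) ≤ f_r(A)`. -/
theorem truncOpt_sum_marginal_losses_le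
    {α : Type*} [DecidableEq α] [Fintype α] (M : Matroid α) (w : α → ℝ)
    (hw : ∀ e, 0 ≤ w e) (r : ℕ)
    (A V : Finset α) (hdisj : Disjoint A V)
    (hA : M.Indep ↑A) (hAV : M.Indep ↑(A ∪ V)) (hcard : (A ∪ V).card ≤ r) :
    (∑ i ∈ V, (truncOpt M w r A - truncOpt M w r (insert i A))) ≤ truncOpt M w r A := by
  classical
  have hVA : ∀ x ∈ V, x ∉ A := fun x hx => Finset.disjoint_right.mp hdisj hx
  -- value sets are finite, hence bounded above
  have hfin : ∀ X : Finset α,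
      ({t : ℝ | ∃ Y : Finset α, MatroidFeasible M r X Y ∧ t = ∑ e ∈ Y, w e}).Finite := by
    intro X
    apply Set.Finite.subset (Set.finite_range (fun Y : Finset α => ∑ e ∈ Y, w e))
    rintro t ⟨Y, _, rfl⟩; exact ⟨Y, rfl⟩
  have hub : ∀ (X Y : Finset α), MatroidFeasible M r X Y →
      (∑ e ∈ Y, w e) ≤ truncOpt M w r X := by
    intro X Y hY
    exact le_csSup ((hfin X).bddAbove) ⟨Y, hY, rfl⟩
  -- the optimum for A is attained
  have hAr : A.card ≤ r := le_trans (Finset.card_le_card Finset.subset_union_left) hcard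
  have hne : ({t : ℝ | ∃ Y : Finset α, MatroidFeasible M r A Y ∧ t = ∑ e ∈ Y, w e}).Nonempty :=
    ⟨∑ e ∈ (∅ : Finset α), w e, ∅,
      ⟨Finset.disjoint_empty_right _, by simpa using hA, by simpa using hAr⟩, rfl⟩
  have hmem : truncOpt M w r A ∈
      {t : ℝ | ∃ Y : Finset α, MatroidFeasible M r A Y ∧ t = ∑ e ∈ Y, w e} :=
    hne.csSup_mem (hfin A)
  obtain ⟨T0, hT0, hT0w⟩ := hmem
  -- choose an optimal feasible set of maximum cardinality
  have hOfin : ({Y : Finset α | MatroidFeasible M r A Y ∧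
      (∑ e ∈ Y, w e) = truncOpt M w r A}).Finite := Set.toFinite _
  obtain ⟨T, hTmem, hTmax⟩ :=
    Set.Finite.exists_maximalFor Finset.card _ hOfin ⟨T0, hT0, hT0w.symm⟩
  obtain ⟨hTfeas, hTw⟩ := hTmem
  obtain ⟨hTdisj, hTind, hTr⟩ := hTfeas
  have hTA : ∀ x ∈ T, x ∉ A := fun x hx => Finset.disjoint_right.mp hTdisj hx
  -- if something can be added to A ∪ T, then A ∪ T already has full rank r
  have hfull : ∀ x, x ∉ A → x ∉ T → M.Indep ↑(insert x (A ∪ T)) → (A ∪ T).card = r := by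
    intro x hxA hxT hind
    by_contra hne
    have hlt : (A ∪ T).card < r := lt_of_le_of_ne hTr hne
    have hxAT : x ∉ A ∪ T := by simp [hxA, hxT]
    have hU : A ∪ insert x T = insert x (A ∪ T) := by
      ext y; simp only [Finset.mem_union, Finset.mem_insert]; tauto
    have hfeas : MatroidFeasible M r A (insert x T) := by
      refine ⟨?_, ?_, ?_⟩
      · rw [Finset.disjoint_insert_right]; exact ⟨hxA, hTdisj⟩
      · rw [hU]; exact hind
      · rw [hU, Finset.card_insert_of_notMem hxAT]; omega
    have h1 := hub A _ hfeas
    rw [Finset.sum_insert hxT] at h1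
    have hwx : w x = 0 := le_antisymm (by rw [← hTw] at h1; linarith) (hw x)
    have hopt : (∑ e ∈ insert x T, w e) = truncOpt M w r A := by
      rw [Finset.sum_insert hxT, hwx, zero_add, hTw]
    have := hTmax (j := insert x T) ⟨hfeas, hopt⟩
      (Finset.card_le_card (Finset.subset_insert _ _))
    rw [Finset.card_insert_of_notMem hxT] at this
    omega
  -- the exchange neighborhoods
  set S : α → Finset α := fun i => if i ∈ T then {i}
    else (T \ V).filter (fun e => M.Indep ↑(A ∪ {i} ∪ (T.erase e))) with hSdef
  have hST : ∀ i, S i ⊆ T := by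
    intro i
    simp only [hSdef]
    split
    · intro y hy; rwa [Finset.mem_singleton.mp hy]
    · exact (Finset.filter_subset _ _).trans (Finset.sdiff_subset)
  -- key exchange fact
  have hexch : ∀ x ∈ V, x ∉ T → ¬ M.Indep ↑(insert x (A ∪ T)) →
      M.Indep ↑(insert x (A ∪ (T ∩ V) ∪ S x)) → False := by
    intro x hxV hxT hdep hind
    have hxA : x ∉ A := hVA x hxV
    have hxAT : x ∉ A ∪ T := by simp [hxA, hxT]
    obtain ⟨K, hK1, hK2, hKind, hKcard⟩ := matroid_aug_chain M (A ∪ T).card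
      (insert x (A ∪ (T ∩ V) ∪ S x)) (A ∪ T) (Nat.sub_le _ _) hind hTind
    have hIsub : A ∪ (T ∩ V) ∪ S x ⊆ A ∪ T := by
      intro y hy
      rcases Finset.mem_union.mp hy with hy | hy
      · rcases Finset.mem_union.mp hy with hy | hy
        · exact Finset.mem_union_left _ hy
        · exact Finset.mem_union_right _ (Finset.mem_of_mem_inter_left hy)
      · exact Finset.mem_union_right _ (hST x hy)
    have hKsub : K ⊆ insert x (A ∪ T) := by
      refine hK2.trans ?_
      intro y hy
      rcases Finset.mem_union.mp hy with hy | hy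
      · rcases Finset.mem_insert.mp hy with rfl | hy
        · exact Finset.mem_insert_self _ _
        · exact Finset.mem_insert_of_mem (hIsub hy)
      · exact Finset.mem_insert_of_mem hy
    have hKne : K ≠ insert x (A ∪ T) := by
      intro h; rw [h] at hKind; exact hdep hKind
    obtain ⟨e, heAT, heK⟩ := Finset.exists_of_ssubset ⟨hKsub, fun h => hKne
      (Finset.Subset.antisymm hKsub h)⟩
    have hKeq : K = (insert x (A ∪ T)).erase e := by
      apply Finset.eq_of_subset_of_card_le
      · intro y hy
        exact Finset.mem_erase.mpr ⟨fun h => heK (h ▸ hy), hKsub hy⟩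
      · rw [Finset.card_erase_of_mem heAT, Finset.card_insert_of_notMem hxAT]
        omega
    have heI : e ∉ insert x (A ∪ (T ∩ V) ∪ S x) := fun h => heK (hK1 h)
    have hex : e ≠ x := fun h => heI (h ▸ Finset.mem_insert_self _ _)
    have heA : e ∉ A := fun h => heI (Finset.mem_insert_of_mem
      (Finset.mem_union_left _ (Finset.mem_union_left _ h)))
    have heS : e ∉ S x := fun h => heI (Finset.mem_insert_of_mem (Finset.mem_union_right _ h))
    have heT : e ∈ T := by
      rcases Finset.mem_insert.mp heAT with h | h
      · exact absurd h hex
      · rcases Finset.mem_union.mp h with h | h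
        · exact absurd h heA
        · exact h
    have heV : e ∉ V := by
      intro h
      exact heI (Finset.mem_insert_of_mem (Finset.mem_union_left _
        (Finset.mem_union_right _ (Finset.mem_inter.mpr ⟨heT, h⟩))))
    -- the set A ∪ {x} ∪ T.erase e is contained in K, hence independent
    have hsub2 : A ∪ {x} ∪ T.erase e ⊆ K := by
      rw [hKeq]
      intro y hy
      rcases Finset.mem_union.mp hy with hy | hy
      · rcases Finset.mem_union.mp hy with hy | hy
        · exact Finset.mem_erase.mpr ⟨fun h => heA (h ▸ hy),
            Finset.mem_insert_of_mem (Finset.mem_union_left _ hy)⟩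
        · rw [Finset.mem_singleton.mp hy]
          exact Finset.mem_erase.mpr ⟨hex.symm, Finset.mem_insert_self _ _⟩
      · obtain ⟨hye, hyT⟩ := Finset.mem_erase.mp hy
        exact Finset.mem_erase.mpr ⟨hye, Finset.mem_insert_of_mem (Finset.mem_union_right _ hyT)⟩
    have hind2 : M.Indep ↑(A ∪ {x} ∪ T.erase e) :=
      hKind.subset (Finset.coe_subset.mpr hsub2)
    apply heS
    simp only [hSdef, if_neg hxT, Finset.mem_filter, Finset.mem_sdiff]
    exact ⟨⟨heT, heV⟩, hind2⟩
  -- Hall condition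
  have hHall : ∀ W : Finset α, W ⊆ V → W.card ≤ (W.biUnion S).card := by
    intro W hWV
    by_contra hcon
    push_neg at hcon
    set U := W.biUnion S with hUdef
    have hUT : U ⊆ T := Finset.biUnion_subset.mpr (fun i _ => hST i)
    have hWTU : W ∩ T ⊆ U := by
      intro i hi
      obtain ⟨hiW, hiT⟩ := Finset.mem_inter.mp hi
      refine Finset.mem_biUnion.mpr ⟨i, hiW, ?_⟩
      simp [hSdef, hiT]
    have hWT_sub : W ∩ T ⊆ T ∩ V := by
      intro i hi
      obtain ⟨h1, h2⟩ := Finset.mem_inter.mp hi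
      exact Finset.mem_inter.mpr ⟨h2, hWV h1⟩
    -- cardinality comparison for the two auxiliary sets
    have e1 : (U \ (T ∩ V)).card + (T ∩ V).card = ((T ∩ V) ∪ U).card := by
      rw [Finset.card_sdiff_add_card, Finset.union_comm]
    have e2 : (W \ (T ∩ V)).card + (T ∩ V).card = ((T ∩ V) ∪ W).card := by
      rw [Finset.card_sdiff_add_card, Finset.union_comm]
    have e3 : W \ (T ∩ V) = W \ T := by
      ext y
      simp only [Finset.mem_sdiff, Finset.mem_inter, not_and]
      constructor
      · rintro ⟨h1, h2⟩; exact ⟨h1, fun hT => h2 hT (hWV h1)⟩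
      · rintro ⟨h1, h2⟩; exact ⟨h1, fun hT _ => h2 hT⟩
    rw [e3] at e2
    have e4 : (U \ (T ∩ V)).card ≤ (U \ (W ∩ T)).card :=
      Finset.card_le_card (Finset.sdiff_subset_sdiff (Finset.Subset.refl _) hWT_sub)
    have e5 : (U \ (W ∩ T)).card = U.card - (W ∩ T).card := Finset.card_sdiff_of_subset hWTU
    have e6 : (W \ T).card = W.card - (W ∩ T).card := by
      rw [← Finset.sdiff_inter_self_left W T, Finset.card_sdiff_of_subset Finset.inter_subset_left]
    have e7 : (W ∩ T).card ≤ U.card := Finset.card_le_card hWTU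
    have e8 : (W ∩ T).card ≤ W.card := Finset.card_le_card Finset.inter_subset_left
    have hcard1 : ((T ∩ V) ∪ U).card < ((T ∩ V) ∪ W).card := by omega
    -- independence of the two sets
    have hTVU_T : (T ∩ V) ∪ U ⊆ T :=
      Finset.union_subset Finset.inter_subset_left hUT
    have hTVW_V : (T ∩ V) ∪ W ⊆ V :=
      Finset.union_subset Finset.inter_subset_right hWV
    have hI0ind : M.Indep ↑(A ∪ ((T ∩ V) ∪ U)) :=
      hTind.subset (Finset.coe_subset.mpr (Finset.union_subset_union_right hTVU_T))
    have hJ0ind : M.Indep ↑(A ∪ ((T ∩ V) ∪ W)) :=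
      hAV.subset (Finset.coe_subset.mpr (Finset.union_subset_union_right hTVW_V))
    have hdisjI : Disjoint A ((T ∩ V) ∪ U) :=
      Finset.disjoint_of_subset_right hTVU_T hTdisj
    have hdisjJ : Disjoint A ((T ∩ V) ∪ W) :=
      Finset.disjoint_of_subset_right hTVW_V hdisj
    have hlt : ((↑(A ∪ ((T ∩ V) ∪ U)) : Set α)).encard < ((↑(A ∪ ((T ∩ V) ∪ W)) : Set α)).encard := by
      rw [Set.encard_coe_eq_coe_finsetCard, Set.encard_coe_eq_coe_finsetCard]
      have c1 := Finset.card_union_of_disjoint hdisjI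
      have c2 := Finset.card_union_of_disjoint hdisjJ
      exact_mod_cast by omega
    obtain ⟨x, hx, hxind⟩ := hI0ind.augment hJ0ind hlt
    have hxJ : x ∈ A ∪ ((T ∩ V) ∪ W) := by simpa using hx.1
    have hxI : x ∉ A ∪ ((T ∩ V) ∪ U) := by simpa using hx.2
    have hxA : x ∉ A := fun h => hxI (Finset.mem_union_left _ h)
    have hxTV : x ∉ T ∩ V := fun h =>
      hxI (Finset.mem_union_right _ (Finset.mem_union_left _ h))
    have hxU : x ∉ U := fun h =>
      hxI (Finset.mem_union_right _ (Finset.mem_union_right _ h))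
    have hxW : x ∈ W := by
      rcases Finset.mem_union.mp hxJ with h | h
      · exact absurd h hxA
      · rcases Finset.mem_union.mp h with h | h
        · exact absurd h hxTV
        · exact h
    have hxV : x ∈ V := hWV hxW
    have hxT : x ∉ T := fun h => hxU (hWTU (Finset.mem_inter.mpr ⟨hxW, h⟩))
    have hSxU : S x ⊆ U := fun y hy => Finset.mem_biUnion.mpr ⟨x, hxW, hy⟩
    have hxind' : M.Indep ↑(insert x (A ∪ ((T ∩ V) ∪ U))) := by simpa using hxind
    have hind' : M.Indep ↑(insert x (A ∪ (T ∩ V) ∪ S x)) := by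
      refine hxind'.subset (Finset.coe_subset.mpr ?_)
      intro y hy
      rcases Finset.mem_insert.mp hy with rfl | hy
      · exact Finset.mem_insert_self _ _
      · refine Finset.mem_insert_of_mem ?_
        rcases Finset.mem_union.mp hy with hy | hy
        · rcases Finset.mem_union.mp hy with hy | hy
          · exact Finset.mem_union_left _ hy
          · exact Finset.mem_union_right _ (Finset.mem_union_left _ hy)
        · exact Finset.mem_union_right _ (Finset.mem_union_right _ (hSxU hy))
    by_cases hit : M.Indep ↑(insert x (A ∪ T))
    · -- A ∪ T has full cardinality r; counting contradiction
      have hrk := hfull x hxA hxT hit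
      have hTVS : T \ V ⊆ S x := by
        intro e he
        simp only [hSdef, if_neg hxT, Finset.mem_filter]
        refine ⟨he, ?_⟩
        refine hit.subset (Finset.coe_subset.mpr ?_)
        intro y hy
        rcases Finset.mem_union.mp hy with hy | hy
        · rcases Finset.mem_union.mp hy with hy | hy
          · exact Finset.mem_insert_of_mem (Finset.mem_union_left _ hy)
          · rw [Finset.mem_singleton.mp hy]; exact Finset.mem_insert_self _ _
        · exact Finset.mem_insert_of_mem
            (Finset.mem_union_right _ (Finset.mem_of_mem_erase hy))
      have hdTVWT : Disjoint (T \ V) (W ∩ T) := by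
        rw [Finset.disjoint_left]
        intro a ha haw
        exact (Finset.mem_sdiff.mp ha).2 (hWV (Finset.mem_inter.mp haw).1)
      have hsubU : (T \ V) ∪ (W ∩ T) ⊆ U :=
        Finset.union_subset (hTVS.trans hSxU) hWTU
      have g1 : (T \ V).card + (W ∩ T).card ≤ U.card := by
        rw [← Finset.card_union_of_disjoint hdTVWT]
        exact Finset.card_le_card hsubU
      have g2 : A.card + T.card = (A ∪ T).card := (Finset.card_union_of_disjoint hTdisj).symm
      have g3 : A.card + V.card = (A ∪ V).card := (Finset.card_union_of_disjoint hdisj).symm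
      have g4 : (T \ V).card = T.card - (T ∩ V).card := by
        rw [← Finset.sdiff_inter_self_left T V, Finset.card_sdiff_of_subset Finset.inter_subset_left]
      have g5 : (V \ T).card = V.card - (V ∩ T).card := by
        rw [← Finset.sdiff_inter_self_left V T, Finset.card_sdiff_of_subset Finset.inter_subset_left]
      have g6 : (T ∩ V).card = (V ∩ T).card := by rw [Finset.inter_comm]
      have g7 : (W \ T).card ≤ (V \ T).card :=
        Finset.card_le_card (Finset.sdiff_subset_sdiff hWV (Finset.Subset.refl _))
      have g8 : (W ∩ T).card + (W \ T).card = W.card := Finset.card_inter_add_card_sdiff W T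
      have g9 : (T ∩ V).card ≤ T.card := Finset.card_le_card Finset.inter_subset_left
      have g10 : (V ∩ T).card ≤ V.card := Finset.card_le_card Finset.inter_subset_left
      omega
    · exact hexch x hxV hxT hit hind'
  -- Hall's marriage theorem
  obtain ⟨f, hfinj, hfS⟩ :
      ∃ f : {x // x ∈ V} → α, Function.Injective f ∧ ∀ x, f x ∈ S x.val := by
    apply (Finset.all_card_le_biUnion_card_iff_exists_injective
      (fun x : {x // x ∈ V} => S x.val)).mp
    intro s
    have h1 : (s.image Subtype.val).card = s.card :=
      Finset.card_image_of_injective _ Subtype.val_injective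
    have h2 : (s.image Subtype.val).biUnion S = s.biUnion (fun x => S x.val) :=
      Finset.image_biUnion
    have h3 := hHall (s.image Subtype.val) (by
      intro y hy
      obtain ⟨x, _, rfl⟩ := Finset.mem_image.mp hy
      exact x.2)
    rw [h1, h2] at h3
    exact h3
  -- per-element loss bound
  have hloss : ∀ x : {i // i ∈ V},
      truncOpt M w r A - truncOpt M w r (insert x.val A) ≤ w (f x) := by
    rintro ⟨i, hiV⟩
    have he : f ⟨i, hiV⟩ ∈ S i := hfS ⟨i, hiV⟩
    generalize hedef : f ⟨i, hiV⟩ = e at he ⊢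
    have hiA : i ∉ A := hVA i hiV
    have heT : e ∈ T := hST i he
    have heA : e ∉ A := hTA e heT
    have hiAT : i ∉ A ∪ T ∨ True := Or.inr trivial
    have key : MatroidFeasible M r (insert i A) (T.erase e) := by
      by_cases hiT : i ∈ T
      · have hei : e = i := by simpa [hSdef, hiT] using he
        subst hei
        have hUeq : insert e A ∪ T.erase e = A ∪ T := by
          ext y
          by_cases hy : y = e
          · simp [hy, hiT]
          · simp [hy]
        refine ⟨?_, ?_, ?_⟩
        · rw [Finset.disjoint_insert_left]
          exact ⟨Finset.notMem_erase _ _,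
            Finset.disjoint_of_subset_right (Finset.erase_subset _ _) hTdisj⟩
        · rw [hUeq]; exact hTind
        · rw [hUeq]; exact hTr
      · have he' : e ∈ T \ V ∧ M.Indep ↑(A ∪ {i} ∪ T.erase e) := by
          simpa [hSdef, hiT] using he
        have hei : i ≠ e := fun h => hiT (h ▸ heT)
        have hUeq : insert i A ∪ T.erase e = A ∪ {i} ∪ T.erase e := by
          ext y
          simp only [Finset.mem_union, Finset.mem_insert, Finset.mem_singleton]
          tauto
        refine ⟨?_, ?_, ?_⟩
        · rw [Finset.disjoint_insert_left]
          exact ⟨fun h => hiT (Finset.mem_of_mem_erase h),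
            Finset.disjoint_of_subset_right (Finset.erase_subset _ _) hTdisj⟩
        · rw [hUeq]; exact he'.2
        · have hsub : insert i A ∪ T.erase e ⊆ (insert i (A ∪ T)).erase e := by
            intro y hy
            rcases Finset.mem_union.mp hy with hy | hy
            · rcases Finset.mem_insert.mp hy with rfl | hy
              · exact Finset.mem_erase.mpr ⟨hei, Finset.mem_insert_self _ _⟩
              · exact Finset.mem_erase.mpr ⟨fun h => heA (h ▸ hy),
                  Finset.mem_insert_of_mem (Finset.mem_union_left _ hy)⟩
            · obtain ⟨hye, hyT⟩ := Finset.mem_erase.mp hy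
              exact Finset.mem_erase.mpr ⟨hye,
                Finset.mem_insert_of_mem (Finset.mem_union_right _ hyT)⟩
          have hiAT : i ∉ A ∪ T := by simp [hiA, hiT]
          calc (insert i A ∪ T.erase e).card ≤ ((insert i (A ∪ T)).erase e).card :=
                Finset.card_le_card hsub
            _ ≤ r := by
                rw [Finset.card_erase_of_mem
                    (Finset.mem_insert_of_mem (Finset.mem_union_right _ heT)),
                  Finset.card_insert_of_notMem hiAT]
                omega
    have hval : (∑ y ∈ T.erase e, w y) = (∑ y ∈ T, w y) - w e := by
      have := Finset.sum_erase_add T w heT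
      linarith
    have h2 := hub (insert i A) (T.erase e) key
    rw [hval, hTw] at h2
    linarith
  calc ∑ i ∈ V, (truncOpt M w r A - truncOpt M w r (insert i A))
      = ∑ x ∈ V.attach, (truncOpt M w r A - truncOpt M w r (insert x.val A)) :=
        (Finset.sum_attach V _).symm
    _ ≤ ∑ x ∈ V.attach, w (f x) := Finset.sum_le_sum (fun x _ => hloss x)
    _ = ∑ e ∈ V.attach.image f, w e :=
        (Finset.sum_image (fun x _ y _ h => hfinj h)).symm
    _ ≤ ∑ e ∈ T, w e := by
        apply Finset.sum_le_sum_of_subset_of_nonneg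
        · intro e he
          obtain ⟨x, _, rfl⟩ := Finset.mem_image.mp he
          exact hST _ (hfS x)
        · exact fun e _ _ => hw e
    _ = truncOpt M w r A := hTw
end

section
/- Let X ∈ 𝓘 and i ∉ X be such that X ∪ {i} ∈ 𝓘 and |X ∪ {i}| ≤ r. Then there exist a set Y_1 feasible for (X, r) with w(Y_1) = f_r(X) and a set Y_2 ⊆ Y_1 feasible for (X ∪ {i}, r) with w(Y_2) = f_{r}(X ∪ {i}) such that |Y_1 \ Y_2| ≤ 1. (Contracting one additional element removes at most one element from a maximum-weight basis of the contracted, truncated matroid, so f_r(X) − f_r(X ∪ {i}) equals the weight of at most one element of Y_1.) -/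
open Finset

/-- The supremum in `truncOpt` is attained, and is an upper bound. -/
lemma exists_truncOpt {α : Type*} [DecidableEq α] [Fintype α] (M : Matroid α) (w : α → ℝ)
    (r : ℕ) (X : Finset α) (h0 : MatroidFeasible M r X ∅) :
    ∃ Y, MatroidFeasible M r X Y ∧ (∑ e ∈ Y, w e) = truncOpt M w r X ∧
      ∀ Z, MatroidFeasible M r X Z → (∑ e ∈ Z, w e) ≤ ∑ e ∈ Y, w e := by
  classical
  set S : Set ℝ := {t : ℝ | ∃ Y : Finset α, MatroidFeasible M r X Y ∧ t = ∑ e ∈ Y, w e} with hSdef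
  have hfin : S.Finite := by
    have hsub : S ⊆ (fun Y : Finset α => ∑ e ∈ Y, w e) '' Set.univ := by
      rintro t ⟨Y, -, rfl⟩; exact ⟨Y, trivial, rfl⟩
    exact (Set.finite_univ.image _).subset hsub
  have hne : S.Nonempty := ⟨_, ∅, h0, rfl⟩
  have hmem : sSup S ∈ S := hne.csSup_mem hfin
  obtain ⟨Y, hY, hYe⟩ := hmem
  refine ⟨Y, hY, ?_, fun Z hZ => ?_⟩
  · exact hYe.symm
  · rw [← hYe]
    exact le_csSup hfin.bddAbove ⟨Z, hZ, rfl⟩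

/-- An independent set can be grown, using elements of a larger independent set, to one of
the same size as the larger set. -/
lemma exists_grow {α : Type*} [DecidableEq α] {M : Matroid α} (Q : Finset α)
    (hQ : M.Indep ↑Q) :
    ∀ n (P : Finset α), M.Indep ↑P → P.card + n = Q.card →
      ∃ P', P ⊆ P' ∧ P' ⊆ P ∪ Q ∧ M.Indep ↑P' ∧ P'.card = Q.card := by
  intro n
  induction n with
  | zero => intro P hP hc; exact ⟨P, Subset.rfl, subset_union_left, hP, by simpa using hc⟩
  | succ n ih =>
    intro P hP hc
    have hlt : (↑P : Set α).encard < (↑Q : Set α).encard := by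
      rw [Set.encard_coe_eq_coe_finsetCard, Set.encard_coe_eq_coe_finsetCard]
      exact_mod_cast Nat.lt_of_lt_of_le (Nat.lt_succ_of_le (Nat.le_refl _)) (by omega)
    obtain ⟨e, he, hind⟩ := hP.augment hQ hlt
    have heQ : e ∈ Q := by simpa using he.1
    have heP : e ∉ P := by simpa using he.2
    have hind' : M.Indep ↑(insert e P) := by rwa [Finset.coe_insert]
    obtain ⟨P', h1, h2, h3, h4⟩ := ih (insert e P) hind' (by
      rw [Finset.card_insert_of_notMem heP]; omega)
    refine ⟨P', (Finset.subset_insert _ _).trans h1, h2.trans ?_, h3, h4⟩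
    intro x hx
    rcases Finset.mem_union.mp hx with hx | hx
    · rcases Finset.mem_insert.mp hx with rfl | hx
      · exact Finset.mem_union_right _ heQ
      · exact Finset.mem_union_left _ hx
    · exact Finset.mem_union_right _ hx

/-- Fundamental-circuit style lemma: if `i` is in the closure of the independent set `I`,
then `i` is in the closure of the set of elements `f ∈ I` whose removal frees `i`. -/
lemma mem_closure_fund {α : Type*} [DecidableEq α] {M : Matroid α} (I : Finset α)
    (hI : M.Indep ↑I) {i : α} (hicl : i ∈ M.closure ↑I) :
    i ∈ M.closure {f : α | f ∈ I ∧ i ∉ M.closure (↑I \ {f})} := by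
  classical
  -- take a minimum-cardinality subset K of I with i ∈ closure K
  have hne : (I.powerset.filter (fun K : Finset α => i ∈ M.closure ↑K)).Nonempty := ⟨I, by simp [hicl]⟩
  obtain ⟨K, hKmem, hKmin⟩ :=
    Finset.exists_min_image (I.powerset.filter (fun K : Finset α => i ∈ M.closure ↑K))
      (fun K => K.card) hne
  rw [Finset.mem_filter, Finset.mem_powerset] at hKmem
  obtain ⟨hKI, hKcl⟩ := hKmem
  have hKsub : (↑K : Set α) ⊆ {f : α | f ∈ I ∧ i ∉ M.closure (↑I \ {f})} := by
    intro f hfK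
    have hfK' : f ∈ K := hfK
    have hfI : f ∈ I := hKI hfK'
    refine ⟨hfI, ?_⟩
    -- minimality: i ∉ closure (K erase f)
    have hclKf : i ∉ M.closure ↑(K.erase f) := by
      intro hcon
      have := hKmin (K.erase f) (by
        rw [Finset.mem_filter, Finset.mem_powerset]
        exact ⟨(Finset.erase_subset _ _).trans hKI, hcon⟩)
      have := Finset.card_erase_lt_of_mem hfK'
      omega
    rw [Finset.coe_erase] at hclKf
    -- closure exchange: f ∈ closure (insert i (K \ {f}))
    have hKeq : insert f ((↑K : Set α) \ {f}) = (↑K : Set α) := by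
      simp [Set.insert_diff_singleton, Set.insert_eq_self.mpr hfK]
    have hexch : f ∈ M.closure (insert i ((↑K : Set α) \ {f})) \ M.closure ((↑K : Set α) \ {f}) :=
      Matroid.closure_exchange (by rw [hKeq]; exact ⟨hKcl, hclKf⟩)
    intro hiIf
    have hsub2 : insert i ((↑K : Set α) \ {f}) ⊆ insert i ((↑I : Set α) \ {f}) :=
      Set.insert_subset_insert (Set.diff_subset_diff_left (by exact_mod_cast hKI))
    have hf2 : f ∈ M.closure (insert i ((↑I : Set α) \ {f})) :=
      M.closure_subset_closure hsub2 hexch.1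
    rw [Matroid.closure_insert_eq_of_mem_closure hiIf] at hf2
    exact hI.notMem_closure_diff_of_mem (by exact_mod_cast hfI) hf2
  exact M.closure_subset_closure hKsub hKcl

/-- Symmetric exchange for independent sets of equal size. -/
lemma indep_symm_exchange {α : Type*} [DecidableEq α] {M : Matroid α} (I J : Finset α)
    (hI : M.Indep ↑I) (hJ : M.Indep ↑J) (hcard : I.card = J.card) {i : α}
    (hiJ : i ∈ J) (hiI : i ∉ I) :
    ∃ f ∈ I, f ∉ J ∧ M.Indep ↑(insert i (I.erase f)) ∧ M.Indep ↑(insert f (J.erase i)) := by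
  classical
  have hiE : i ∈ M.E := hJ.subset_ground (by exact_mod_cast hiJ)
  have hJe : M.Indep ↑(J.erase i) := hJ.subset (by exact_mod_cast Finset.erase_subset _ _)
  have hiJe : i ∉ M.closure ↑(J.erase i) := by
    have : M.Indep (insert i ↑(J.erase i)) := by
      rw [← Finset.coe_insert, Finset.insert_erase hiJ]; exact hJ
    have := (hJe.insert_indep_iff_of_notMem (by simp)).mp this
    exact this.2
  by_cases hdep : M.Indep (insert i (↑I : Set α))
  · -- easy case: augment J.erase i from I
    have hlt : (↑(J.erase i) : Set α).encard < (↑I : Set α).encard := by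
      rw [Set.encard_coe_eq_coe_finsetCard, Set.encard_coe_eq_coe_finsetCard,
        Finset.card_erase_of_mem hiJ]
      have : 0 < J.card := Finset.card_pos.mpr ⟨i, hiJ⟩
      exact_mod_cast by omega
    obtain ⟨f, hf, hind⟩ := hJe.augment hI hlt
    have hfI : f ∈ I := by simpa using hf.1
    have hfne : f ≠ i := fun h => hiI (h ▸ hfI)
    have hfJ : f ∉ J := fun h => hf.2 (by exact_mod_cast Finset.mem_erase.mpr ⟨hfne, h⟩)
    refine ⟨f, hfI, hfJ, ?_, by rwa [Finset.coe_insert]⟩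
    refine hdep.subset ?_
    rw [Finset.coe_insert]
    exact Set.insert_subset_insert (by exact_mod_cast Finset.erase_subset _ _)
  · -- i ∈ closure I
    have hicl : i ∈ M.closure ↑I := by
      by_contra hni
      exact hdep ((hI.insert_indep_iff_of_notMem (by exact_mod_cast hiI)).mpr ⟨hiE, hni⟩)
    by_contra hcon
    push_neg at hcon
    -- every f in the fundamental set lies in closure (J.erase i)
    have hTsub : {f : α | f ∈ I ∧ i ∉ M.closure (↑I \ {f})} ⊆ M.closure ↑(J.erase i) := by
      rintro f ⟨hfI, hficl⟩
      have hfE : f ∈ M.E := hI.subset_ground (by exact_mod_cast hfI)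
      have hIf : M.Indep ((↑I : Set α) \ {f}) := hI.subset Set.diff_subset
      have hind1 : M.Indep ↑(insert i (I.erase f)) := by
        rw [Finset.coe_insert, Finset.coe_erase]
        exact (hIf.insert_indep_iff_of_notMem (by simp [hiI])).mpr ⟨hiE, hficl⟩
      by_cases hfJ : f ∈ J
      · have : f ∈ J.erase i := Finset.mem_erase.mpr ⟨fun h => hiI (h ▸ hfI), hfJ⟩
        exact M.mem_closure_of_mem (by exact_mod_cast this) (hJe.subset_ground)
      · have hnind2 := hcon f hfI hfJ hind1
        rw [Finset.coe_insert] at hnind2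
        have := (not_iff_not.mpr (hJe.insert_indep_iff_of_notMem
          (fun h => hfJ (Finset.mem_of_mem_erase (by exact_mod_cast h))))).mp hnind2
        simp only [Set.mem_diff, not_and, not_not] at this
        exact this hfE
    have : i ∈ M.closure ↑(J.erase i) :=
      M.closure_subset_closure_of_subset_closure hTsub (mem_closure_fund I hI hicl)
    exact hiJe this

/-- Contracting one additional element removes at most one element from a maximum-weight
basis of the contracted, truncated matroid: for independent `X`, `i ∉ X` with `X ∪ {i}`
independent and `|X ∪ {i}| ≤ r`, there are `Y₁` feasible for `(X, r)` attaining `f_r(X)`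
and `Y₂ ⊆ Y₁` feasible for `(X ∪ {i}, r)` attaining `f_r(X ∪ {i})` with `|Y₁ \ Y₂| ≤ 1`. -/
theorem truncOpt_contract_removes_at_most_one
    {α : Type*} [DecidableEq α] [Fintype α] (M : Matroid α) (w : α → ℝ)
    (hw : ∀ e, 0 ≤ w e) (r : ℕ)
    (X : Finset α) (i : α) (hiX : i ∉ X)
    (hX : M.Indep ↑X) (hXi : M.Indep ↑(insert i X))
    (hcard : (insert i X).card ≤ r) :
    ∃ Y₁ Y₂ : Finset α,
      MatroidFeasible M r X Y₁ ∧ (∑ e ∈ Y₁, w e) = truncOpt M w r X ∧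
      Y₂ ⊆ Y₁ ∧
      MatroidFeasible M r (insert i X) Y₂ ∧
      (∑ e ∈ Y₂, w e) = truncOpt M w r (insert i X) ∧
      (Y₁ \ Y₂).card ≤ 1 := by
  classical
  set X' := insert i X with hX'def
  have hXr : X.card ≤ r := le_trans (Finset.card_le_card (Finset.subset_insert _ _)) hcard
  have h0X : MatroidFeasible M r X ∅ :=
    ⟨Finset.disjoint_empty_right _, by simpa using hX, by simpa using hXr⟩
  have h0X' : MatroidFeasible M r X' ∅ :=
    ⟨Finset.disjoint_empty_right _, by simpa using hXi, by simpa using hcard⟩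
  obtain ⟨Y₂, hY₂f, hY₂opt, hY₂max⟩ := exists_truncOpt M w r X' h0X'
  obtain ⟨hY₂disj, hY₂ind, hY₂card⟩ := hY₂f
  have hiY₂ : i ∉ Y₂ := Finset.disjoint_left.mp hY₂disj (Finset.mem_insert_self _ _)
  have hXY₂disj : Disjoint X Y₂ :=
    Finset.disjoint_of_subset_left (Finset.subset_insert _ _) hY₂disj
  have hunion_eq : X' ∪ Y₂ = X ∪ insert i Y₂ := by
    rw [hX'def, Finset.insert_union, Finset.union_insert]
  -- the set of elements addable to Y₂ (keeping feasibility for X)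
  set Add : Finset α := Finset.univ.filter (fun e =>
    e ∉ X ∪ Y₂ ∧ M.Indep ↑(X ∪ insert e Y₂) ∧ (X ∪ insert e Y₂).card ≤ r) with hAdd
  have hiAdd : i ∈ Add := by
    rw [hAdd, Finset.mem_filter]
    refine ⟨Finset.mem_univ _, ?_, ?_, ?_⟩
    · simp [hiX, hiY₂]
    · rwa [← hunion_eq]
    · rwa [← hunion_eq]
  obtain ⟨e₀, he₀Add, he₀max⟩ := Finset.exists_max_image Add w ⟨i, hiAdd⟩
  rw [hAdd, Finset.mem_filter] at he₀Add
  obtain ⟨-, he₀XY, he₀ind, he₀card⟩ := he₀Add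
  have he₀X : e₀ ∉ X := fun h => he₀XY (Finset.mem_union_left _ h)
  have he₀Y₂ : e₀ ∉ Y₂ := fun h => he₀XY (Finset.mem_union_right _ h)
  have hwi_le : w i ≤ w e₀ := he₀max i hiAdd
  set Y₁ := insert e₀ Y₂ with hY₁def
  have hY₁f : MatroidFeasible M r X Y₁ :=
    ⟨Finset.disjoint_insert_right.mpr ⟨he₀X, hXY₂disj⟩, he₀ind, he₀card⟩
  have hY₁sum : (∑ e ∈ Y₁, w e) = w e₀ + ∑ e ∈ Y₂, w e := Finset.sum_insert he₀Y₂
  -- the crux: every feasible set for X has weight at most w(Y₁)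
  have hcrux : ∀ B, MatroidFeasible M r X B → (∑ e ∈ B, w e) ≤ ∑ e ∈ Y₁, w e := by
    intro B hB
    obtain ⟨hBdisj, hBind, hBcard⟩ := hB
    have hQ₀ind : M.Indep ↑(X' ∪ Y₂) := hunion_eq ▸ hY₂ind
    have hQ₀card : (X' ∪ Y₂).card ≤ r := hunion_eq ▸ hY₂card
    -- get P ⊇ X ∪ B and Q ⊇ X' ∪ Y₂ independent of equal size ≤ r
    obtain ⟨P, Q, hPind, hQind, hPQcard, hPr, hXBP, hQsup⟩ :
        ∃ P Q : Finset α, M.Indep ↑P ∧ M.Indep ↑Q ∧ P.card = Q.card ∧ P.card ≤ r ∧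
          X ∪ B ⊆ P ∧ X' ∪ Y₂ ⊆ Q := by
      rcases le_total (X ∪ B).card (X' ∪ Y₂).card with hle | hle
      · obtain ⟨P, h1, h2, h3, h4⟩ := exists_grow (X' ∪ Y₂) hQ₀ind ((X' ∪ Y₂).card - (X ∪ B).card)
          (X ∪ B) hBind (by omega)
        exact ⟨P, X' ∪ Y₂, h3, hQ₀ind, by omega, by omega, h1, Subset.rfl⟩
      · obtain ⟨Q, h1, h2, h3, h4⟩ := exists_grow (X ∪ B) hBind ((X ∪ B).card - (X' ∪ Y₂).card)
          (X' ∪ Y₂) hQ₀ind (by omega)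
        exact ⟨X ∪ B, Q, hBind, h3, by omega, by omega, Subset.rfl, h1⟩
    have hXP : X ⊆ P := (Finset.subset_union_left).trans hXBP
    have hBP : B ⊆ P := (Finset.subset_union_right).trans hXBP
    have hXQ : X ⊆ Q := ((Finset.subset_insert _ _).trans Finset.subset_union_left).trans hQsup
    have hiQ : i ∈ Q := hQsup (Finset.mem_union_left _ (Finset.mem_insert_self _ _))
    have hY₂Q : Y₂ ⊆ Q := (Finset.subset_union_right).trans hQsup
    have hBsub : (∑ e ∈ B, w e) ≤ ∑ e ∈ P \ X, w e := by
      refine Finset.sum_le_sum_of_subset_of_nonneg ?_ (fun e _ _ => hw e)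
      intro x hx
      exact Finset.mem_sdiff.mpr ⟨hBP hx, fun hxX => (Finset.disjoint_right.mp hBdisj hx) hxX⟩
    have hPXcard : X ∪ (P \ X) = P := Finset.union_sdiff_of_subset hXP
    by_cases hiP : i ∈ P
    · -- remove i from P \ X; the rest is feasible for X'
      have hiPX : i ∈ P \ X := Finset.mem_sdiff.mpr ⟨hiP, hiX⟩
      have hZeq : X' ∪ (P \ X).erase i = P := by
        rw [hX'def]
        ext x
        simp only [Finset.mem_union, Finset.mem_insert, Finset.mem_erase, Finset.mem_sdiff]
        constructor
        · rintro ((rfl | hx) | ⟨hne, hx, -⟩)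
          · exact hiP
          · exact hXP hx
          · exact hx
        · intro hx
          by_cases hxX : x ∈ X
          · exact Or.inl (Or.inr hxX)
          · by_cases hxi : x = i
            · exact Or.inl (Or.inl hxi)
            · exact Or.inr ⟨hxi, hx, hxX⟩
      have hZfeas : MatroidFeasible M r X' ((P \ X).erase i) := by
        refine ⟨?_, by rwa [hZeq], by rwa [hZeq]⟩
        rw [hX'def, Finset.disjoint_insert_left]
        exact ⟨by simp, Finset.disjoint_of_subset_right
          (Finset.erase_subset _ _) (Finset.sdiff_disjoint).symm⟩
      have hsum : (∑ e ∈ P \ X, w e) = w i + ∑ e ∈ (P \ X).erase i, w e :=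
        (Finset.add_sum_erase _ _ hiPX).symm
      calc (∑ e ∈ B, w e) ≤ ∑ e ∈ P \ X, w e := hBsub
        _ = w i + ∑ e ∈ (P \ X).erase i, w e := hsum
        _ ≤ w e₀ + ∑ e ∈ Y₂, w e := add_le_add hwi_le (hY₂max _ hZfeas)
        _ = ∑ e ∈ Y₁, w e := hY₁sum.symm
    · -- symmetric exchange between P and Q
      obtain ⟨f, hfP, hfQ, hind1, hind2⟩ := indep_symm_exchange P Q hPind hQind hPQcard hiQ hiP
      have hfX : f ∉ X := fun h => hfQ (hXQ h)
      have hfY₂ : f ∉ Y₂ := fun h => hfQ (hY₂Q h)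
      have hfne : f ≠ i := fun h => hiP (h ▸ hfP)
      -- f is addable to Y₂
      have hfAdd : f ∈ Add := by
        rw [hAdd, Finset.mem_filter]
        refine ⟨Finset.mem_univ _, by simp [hfX, hfY₂], ?_, ?_⟩
        · refine hind2.subset ?_
          rw [Finset.coe_insert]
          intro x hx
          simp only [Finset.coe_union, Finset.coe_insert, Set.mem_union, Set.mem_insert_iff] at hx
          rcases hx with hx | (rfl | hx)
          · have hx' : x ∈ X := by exact_mod_cast hx
            exact Set.mem_insert_iff.mpr (Or.inr (by
              exact_mod_cast Finset.mem_erase.mpr ⟨fun h => hiX (by rw [← h]; exact hx'), hXQ hx'⟩))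
          · exact Set.mem_insert_iff.mpr (Or.inl rfl)
          · have hx' : x ∈ Y₂ := by exact_mod_cast hx
            exact Set.mem_insert_iff.mpr (Or.inr (by
              exact_mod_cast Finset.mem_erase.mpr ⟨fun h => hiY₂ (by rw [← h]; exact hx'), hY₂Q hx'⟩))
        · have hsub : X ∪ insert f Y₂ ⊆ insert f (Q.erase i) := by
            intro x hx
            rcases Finset.mem_union.mp hx with hx | hx
            · exact Finset.mem_insert_of_mem
                (Finset.mem_erase.mpr ⟨fun h => hiX (h ▸ hx), hXQ hx⟩)
            · rcases Finset.mem_insert.mp hx with rfl | hx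
              · exact Finset.mem_insert_self _ _
              · exact Finset.mem_insert_of_mem
                  (Finset.mem_erase.mpr ⟨fun h => hiY₂ (h ▸ hx), hY₂Q hx⟩)
          calc (X ∪ insert f Y₂).card ≤ (insert f (Q.erase i)).card :=
                Finset.card_le_card hsub
            _ ≤ (Q.erase i).card + 1 := Finset.card_insert_le _ _
            _ = Q.card := by
                have hQpos : 0 < Q.card := Finset.card_pos.mpr ⟨i, hiQ⟩
                rw [Finset.card_erase_of_mem hiQ]; omega
            _ ≤ r := by omega
      have hwf_le : w f ≤ w e₀ := he₀max f hfAdd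
      -- (P \ X).erase f is feasible for X'
      have hfPX : f ∈ P \ X := Finset.mem_sdiff.mpr ⟨hfP, hfX⟩
      have hZeq : X' ∪ (P \ X).erase f = insert i (P.erase f) := by
        rw [hX'def]
        ext x
        simp only [Finset.mem_union, Finset.mem_insert, Finset.mem_erase, Finset.mem_sdiff]
        constructor
        · rintro ((rfl | hx) | ⟨hne, hx, hxX⟩)
          · exact Or.inl rfl
          · exact Or.inr ⟨fun h => hfX (h ▸ hx), hXP hx⟩
          · exact Or.inr ⟨hne, hx⟩
        · rintro (rfl | ⟨hne, hx⟩)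
          · exact Or.inl (Or.inl rfl)
          · by_cases hxX : x ∈ X
            · exact Or.inl (Or.inr hxX)
            · exact Or.inr ⟨hne, hx, hxX⟩
      have hZcard : (insert i (P.erase f)).card ≤ r := by
        calc (insert i (P.erase f)).card ≤ (P.erase f).card + 1 := Finset.card_insert_le _ _
          _ = P.card := by rw [Finset.card_erase_of_mem hfP]
                           have : 0 < P.card := Finset.card_pos.mpr ⟨f, hfP⟩
                           omega
          _ ≤ r := hPr
      have hZfeas : MatroidFeasible M r X' ((P \ X).erase f) := by
        refine ⟨?_, by rw [hZeq]; exact hind1, by rwa [hZeq]⟩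
        rw [hX'def, Finset.disjoint_insert_left]
        refine ⟨fun h => hiP (Finset.sdiff_subset (Finset.erase_subset _ _ h)), ?_⟩
        exact Finset.disjoint_of_subset_right
          (Finset.erase_subset _ _) (Finset.sdiff_disjoint).symm
      have hsum : (∑ e ∈ P \ X, w e) = w f + ∑ e ∈ (P \ X).erase f, w e :=
        (Finset.add_sum_erase _ _ hfPX).symm
      calc (∑ e ∈ B, w e) ≤ ∑ e ∈ P \ X, w e := hBsub
        _ = w f + ∑ e ∈ (P \ X).erase f, w e := hsum
        _ ≤ w e₀ + ∑ e ∈ Y₂, w e := add_le_add hwf_le (hY₂max _ hZfeas)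
        _ = ∑ e ∈ Y₁, w e := hY₁sum.symm
  -- Y₁ attains truncOpt for X
  have hY₁opt : (∑ e ∈ Y₁, w e) = truncOpt M w r X := by
    obtain ⟨Y, hYf, hYopt, hYmax⟩ := exists_truncOpt M w r X h0X
    have h1 : (∑ e ∈ Y₁, w e) ≤ ∑ e ∈ Y, w e := hYmax _ hY₁f
    have h2 : (∑ e ∈ Y, w e) ≤ ∑ e ∈ Y₁, w e := hcrux _ hYf
    rw [← hYopt]
    exact le_antisymm h1 h2
  refine ⟨Y₁, Y₂, hY₁f, hY₁opt, Finset.subset_insert _ _,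
    ⟨hY₂disj, hY₂ind, hY₂card⟩, hY₂opt, ?_⟩
  have : Y₁ \ Y₂ ⊆ {e₀} := by
    intro x hx
    obtain ⟨hx1, hx2⟩ := Finset.mem_sdiff.mp hx
    rcases Finset.mem_insert.mp hx1 with rfl | hx1
    · exact Finset.mem_singleton_self _
    · exact absurd hx1 hx2
  calc (Y₁ \ Y₂).card ≤ ({e₀} : Finset α).card := Finset.card_le_card this
    _ = 1 := Finset.card_singleton _
end

section
/- In the knapsack mechanism (Algorithm 1) with buyers sorted so that w_1 ≥ w_2 ≥ … ≥ w_n, truthful reporting is a dominant strategy for every seller: fix a seller j, her true value v_j, and arbitrary fixed values of all other agents; let u_j(x) be seller j's utility when she reports x (so every comparison of her value against an offered price in Algorithm 1 uses x), namely v_j if she ends the mechanism holding her item and p_i if her item is sold at price p_i. Then u_j(v_j) ≥ u_j(x) for every x ≥ 0. -/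
open Finset MeasureTheory ProbabilityTheory
open scoped Classical

/-- The state of Algorithm 1 (the knapsack double-auction mechanism).
Buyers are indexed by `Sum.inl i` (`i < n`), sellers by `Sum.inr j` (`j < k`).
* `A` is the set of agents who were irrevocably allocated an item during the while-loop,
* `i`/`j` are the current buyer/seller indices,
* `W` is the total artificial weight of the irrevocably allocated items,
* `P a` is the price of the iteration in which agent `a` was added to `A`,
* `sold j` is the price at which seller `j`'s item was sold (if it was sold). -/
structure KnapState where
  A : Finset (ℕ ⊕ ℕ)
  i : ℕ
  j : ℕ
  W : ℝ
  P : ℕ ⊕ ℕ → ℝ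
  sold : ℕ → ℝ

/-- One pass of the while-loop of Algorithm 1 with the given amount of `fuel`. -/
noncomputable def knapStep (n k : ℕ) (wstar p vB vS : ℕ → ℝ) :
    ℕ → KnapState → KnapState
  | 0, s => s
  | (fuel + 1), s =>
    if s.i < n ∧ s.j < k then
      if 1 < s.W + wstar s.i then
        knapStep n k wstar p vB vS fuel { s with i := s.i + 1 }
      else if p s.i ≤ vS s.j then
        knapStep n k wstar p vB vS fuel
          { s with A := insert (Sum.inr s.j) s.A, W := s.W + wstar s.i, j := s.j + 1,
                   P := Function.update s.P (Sum.inr s.j) (p s.i) }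
      else if p s.i ≤ vB s.i then
        knapStep n k wstar p vB vS fuel
          { s with A := insert (Sum.inl s.i) s.A, W := s.W + wstar s.i,
                   i := s.i + 1, j := s.j + 1,
                   P := Function.update s.P (Sum.inl s.i) (p s.i),
                   sold := Function.update s.sold s.j (p s.i) }
      else
        knapStep n k wstar p vB vS fuel { s with i := s.i + 1 }
    else s

/-- The final state of the while-loop of Algorithm 1 (fuel `n + k` suffices since every
iteration increases `i` or `j`). -/
noncomputable def knapRun (n k : ℕ) (wstar p vB vS : ℕ → ℝ) : KnapState :=
  knapStep n k wstar p vB vS (n + k)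
    { A := ∅, i := 0, j := 0, W := 0, P := fun _ => 0, sold := fun _ => 0 }

/-- The set `A` of agents holding an item after Algorithm 1: the agents allocated during the
while-loop together with all remaining sellers `j' ≥ j`, who keep their items. -/
noncomputable def knapFinalA (n k : ℕ) (wstar p vB vS : ℕ → ℝ) : Finset (ℕ ⊕ ℕ) :=
  (knapRun n k wstar p vB vS).A ∪
    ((Finset.range k).filter (fun j' => (knapRun n k wstar p vB vS).j ≤ j')).image Sum.inr

/-- `OPT(v)`: the maximum of `∑_{a ∈ A} v_a` over all sets `A` of buyers (`Sum.inl i`, `i < n`)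
and sellers (`Sum.inr j`, `j < k`) with `|A| ≤ k` whose buyers satisfy the knapsack
constraint `∑ w_i ≤ 1`. -/
noncomputable def knapOPT (n k : ℕ) (w : ℕ → ℝ) (vB vS : ℕ → ℝ) : ℝ :=
  sSup {t : ℝ | ∃ A : Finset (ℕ ⊕ ℕ),
    (∀ a ∈ A, Sum.elim (fun i => i < n) (fun j => j < k) a) ∧
    A.card ≤ k ∧
    (∑ a ∈ A, Sum.elim w (fun _ => (0 : ℝ)) a) ≤ 1 ∧
    t = ∑ a ∈ A, Sum.elim vB vS a}

/-! ### Auxiliary lemmas for the truthfulness proof -/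

/-- The state after the "weight too big / no trade" step (buyer index advances). -/
noncomputable def stSkip (s : KnapState) : KnapState := { s with i := s.i + 1 }

/-- The state after the "seller keeps her item" step. -/
noncomputable def stKeep (wstar p : ℕ → ℝ) (s : KnapState) : KnapState :=
  { s with A := insert (Sum.inr s.j) s.A, W := s.W + wstar s.i, j := s.j + 1,
           P := Function.update s.P (Sum.inr s.j) (p s.i) }

/-- The state after the "item sold to buyer `s.i`" step. -/
noncomputable def stBuy (wstar p : ℕ → ℝ) (s : KnapState) : KnapState :=
  { s with A := insert (Sum.inl s.i) s.A, W := s.W + wstar s.i,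
           i := s.i + 1, j := s.j + 1,
           P := Function.update s.P (Sum.inl s.i) (p s.i),
           sold := Function.update s.sold s.j (p s.i) }

/-- Seller `j0`'s utility extracted from a (final) state `f`. -/
noncomputable def knapUtilOf (j0 : ℕ) (v : ℝ) (f : KnapState) : ℝ :=
  if Sum.inr j0 ∈ f.A ∨ f.j ≤ j0 then v else f.sold j0

lemma knapUtilOf_mem (j0 : ℕ) (v : ℝ) (f : KnapState) (h : Sum.inr j0 ∈ f.A) :
    knapUtilOf j0 v f = v := if_pos (Or.inl h)

lemma knapUtilOf_keep (j0 : ℕ) (v : ℝ) (f : KnapState) (h : f.j ≤ j0) :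
    knapUtilOf j0 v f = v := if_pos (Or.inr h)

lemma knapStep_j_mono (n k : ℕ) (wstar p vB vS : ℕ → ℝ) :
    ∀ fuel s, s.j ≤ (knapStep n k wstar p vB vS fuel s).j := by
  intro fuel
  induction fuel with
  | zero => intro s; simp [knapStep]
  | succ m ih =>
    intro s
    rw [knapStep]
    split_ifs with h1 h2 h3 h4
    · exact ih (stSkip s)
    · exact le_trans (Nat.le_succ _) (ih (stKeep wstar p s))
    · exact le_trans (Nat.le_succ _) (ih (stBuy wstar p s))
    · exact ih (stSkip s)
    · exact le_refl _

lemma knapStep_memA (n k j0 : ℕ) (wstar p vB vS : ℕ → ℝ) :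
    ∀ fuel s, Sum.inr j0 ∈ s.A → Sum.inr j0 ∈ (knapStep n k wstar p vB vS fuel s).A := by
  intro fuel
  induction fuel with
  | zero => intro s h; simpa [knapStep] using h
  | succ m ih =>
    intro s h
    rw [knapStep]
    split_ifs with h1 h2 h3 h4
    · exact ih (stSkip s) h
    · exact ih (stKeep wstar p s) (Finset.mem_insert_of_mem h)
    · exact ih (stBuy wstar p s) (Finset.mem_insert_of_mem h)
    · exact ih (stSkip s) h
    · exact h

/-- Once the loop has passed seller `j0`, her membership in `A` and sale price are frozen. -/
lemma knapStep_past (n k j0 : ℕ) (wstar p vB vS : ℕ → ℝ) :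
    ∀ fuel s, j0 < s.j →
      ((Sum.inr j0 ∈ (knapStep n k wstar p vB vS fuel s).A ↔ Sum.inr j0 ∈ s.A) ∧
        (knapStep n k wstar p vB vS fuel s).sold j0 = s.sold j0) := by
  intro fuel
  induction fuel with
  | zero => intro s h; constructor <;> simp [knapStep]
  | succ m ih =>
    intro s h
    rw [knapStep]
    split_ifs with h1 h2 h3 h4
    · exact ih (stSkip s) h
    · have := ih (stKeep wstar p s) (Nat.lt_succ_of_lt h)
      refine ⟨this.1.trans ?_, this.2.trans ?_⟩
      · simp [stKeep, Finset.mem_insert, Nat.ne_of_lt h]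
      · rfl
    · have := ih (stBuy wstar p s) (Nat.lt_succ_of_lt h)
      refine ⟨this.1.trans ?_, this.2.trans ?_⟩
      · simp [stBuy, Finset.mem_insert]
      · show Function.update s.sold s.j (p s.i) j0 = s.sold j0
        exact Function.update_of_ne (Nat.ne_of_lt h) _ _
    · exact ih (stSkip s) h
    · exact ⟨Iff.rfl, rfl⟩

lemma util_step_mem (n k j0 : ℕ) (wstar p vB vS : ℕ → ℝ) (v : ℝ) (fuel : ℕ) (s : KnapState)
    (h : Sum.inr j0 ∈ s.A) :
    knapUtilOf j0 v (knapStep n k wstar p vB vS fuel s) = v :=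
  knapUtilOf_mem _ _ _ (knapStep_memA n k j0 wstar p vB vS fuel s h)

lemma util_step_past (n k j0 : ℕ) (wstar p vB vS : ℕ → ℝ) (v : ℝ) (fuel : ℕ) (s : KnapState)
    (h : j0 < s.j) :
    knapUtilOf j0 v (knapStep n k wstar p vB vS fuel s) =
      if Sum.inr j0 ∈ s.A then v else s.sold j0 := by
  have hpa := knapStep_past n k j0 wstar p vB vS fuel s h
  have hj := lt_of_lt_of_le h (knapStep_j_mono n k wstar p vB vS fuel s)
  unfold knapUtilOf
  rw [hpa.2]
  by_cases hm : Sum.inr j0 ∈ s.A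
  · rw [if_pos (Or.inl (hpa.1.mpr hm)), if_pos hm]
  · rw [if_neg, if_neg hm]
    rintro (h' | h')
    · exact hm (hpa.1.mp h')
    · omega
/-- Reporting her true value `v`, seller `j0` always ends up with utility at least `v`:
she only sells at a price exceeding `v`. -/
lemma knapUtil_ge_true (n k j0 : ℕ) (wstar p vB vS : ℕ → ℝ) (v : ℝ) (hv : vS j0 = v) :
    ∀ fuel s, s.j ≤ j0 → Sum.inr j0 ∉ s.A →
      v ≤ knapUtilOf j0 v (knapStep n k wstar p vB vS fuel s) := by
  intro fuel
  induction fuel with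
  | zero =>
    intro s hj hA
    rw [show knapStep n k wstar p vB vS 0 s = s from by rw [knapStep], knapUtilOf_keep j0 v s hj]
  | succ m ih =>
    intro s hj hA
    rw [knapStep]
    split_ifs with h1 h2 h3 h4
    · exact ih (stSkip s) hj hA
    · by_cases heq : s.j = j0
      · refine le_of_eq (util_step_mem n k j0 wstar p vB vS v m (stKeep wstar p s) ?_).symm
        show Sum.inr j0 ∈ insert (Sum.inr s.j) s.A
        rw [heq]; exact Finset.mem_insert_self _ _
      · refine ih (stKeep wstar p s) (Nat.succ_le_of_lt (lt_of_le_of_ne hj heq)) ?_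
        show Sum.inr j0 ∉ insert (Sum.inr s.j) s.A
        simp [Finset.mem_insert, hA, Ne.symm heq]
    · by_cases heq : s.j = j0
      · show v ≤ knapUtilOf j0 v (knapStep n k wstar p vB vS m (stBuy wstar p s))
        rw [util_step_past n k j0 wstar p vB vS v m (stBuy wstar p s) (by show j0 < s.j + 1; omega)]
        rw [if_neg (by show Sum.inr j0 ∉ insert (Sum.inl s.i) s.A; simp [hA])]
        show v ≤ Function.update s.sold s.j (p s.i) j0
        rw [← heq, Function.update_self]
        rw [heq, hv] at h3
        exact le_of_lt (not_le.mp h3)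
      · refine ih (stBuy wstar p s) (Nat.succ_le_of_lt (lt_of_le_of_ne hj heq)) ?_
        show Sum.inr j0 ∉ insert (Sum.inl s.i) s.A
        simp [hA]
    · exact ih (stSkip s) hj hA
    · exact le_of_eq (knapUtilOf_keep j0 v s hj).symm

/-- If all prices that can still be offered while the loop sits at seller `j0` are at most `c`
(and `v ≤ c`), then seller `j0`'s utility is at most `c`, whatever she reports. -/
lemma knapUtil_le_bound (n k j0 : ℕ) (wstar p vB vS : ℕ → ℝ) (v c : ℝ) (hvc : v ≤ c) :
    ∀ fuel s, s.j = j0 → Sum.inr j0 ∉ s.A → (∀ i', s.i ≤ i' → i' < n → p i' ≤ c) →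
      knapUtilOf j0 v (knapStep n k wstar p vB vS fuel s) ≤ c := by
  intro fuel
  induction fuel with
  | zero =>
    intro s hj hA hpr
    rw [show knapStep n k wstar p vB vS 0 s = s from by rw [knapStep],
      knapUtilOf_keep j0 v s (le_of_eq hj)]
    exact hvc
  | succ m ih =>
    intro s hj hA hpr
    rw [knapStep]
    split_ifs with h1 h2 h3 h4
    · exact ih (stSkip s) hj hA (fun i' hi hi' => hpr i' (by simp only [stSkip] at hi; omega) hi')
    · show knapUtilOf j0 v (knapStep n k wstar p vB vS m (stKeep wstar p s)) ≤ c
      rw [util_step_mem n k j0 wstar p vB vS v m (stKeep wstar p s)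
        (by show Sum.inr j0 ∈ insert (Sum.inr s.j) s.A; rw [hj]; exact Finset.mem_insert_self _ _)]
      exact hvc
    · show knapUtilOf j0 v (knapStep n k wstar p vB vS m (stBuy wstar p s)) ≤ c
      rw [util_step_past n k j0 wstar p vB vS v m (stBuy wstar p s) (by show j0 < s.j + 1; omega)]
      rw [if_neg (by show Sum.inr j0 ∉ insert (Sum.inl s.i) s.A; simp [hA])]
      show Function.update s.sold s.j (p s.i) j0 ≤ c
      rw [← hj, Function.update_self]
      exact hpr s.i le_rfl h1.1
    · exact ih (stSkip s) hj hA (fun i' hi hi' => hpr i' (by simp only [stSkip] at hi; omega) hi')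
    · rw [knapUtilOf_keep j0 v s (le_of_eq hj)]
      exact hvc
/-- Main induction: reporting the true value `v` dominates reporting any `x`, from any state
that has not yet passed seller `j0`. -/
lemma knapUtil_main (n k j0 : ℕ) (wstar p vB vS : ℕ → ℝ) (v x : ℝ)
    (hpmono : ∀ i i', i ≤ i' → i' < n → p i' ≤ p i) :
    ∀ fuel s, s.j ≤ j0 → Sum.inr j0 ∉ s.A →
      knapUtilOf j0 v (knapStep n k wstar p vB (Function.update vS j0 x) fuel s) ≤
        knapUtilOf j0 v (knapStep n k wstar p vB (Function.update vS j0 v) fuel s) := by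
  intro fuel
  induction fuel with
  | zero =>
    intro s hj hA
    simp only [knapStep]
    rw [knapUtilOf_keep j0 v s hj]
  | succ m ih =>
    intro s hj hA
    simp only [knapStep]
    by_cases h1 : s.i < n ∧ s.j < k
    · rw [if_pos h1, if_pos h1]
      by_cases h2 : 1 < s.W + wstar s.i
      · rw [if_pos h2, if_pos h2]
        exact ih (stSkip s) hj hA
      · rw [if_neg h2, if_neg h2]
        by_cases heq : s.j = j0
        · rw [show Function.update vS j0 x s.j = x from by rw [heq, Function.update_self],
              show Function.update vS j0 v s.j = v from by rw [heq, Function.update_self]]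
          have hmemK : Sum.inr j0 ∈ (stKeep wstar p s).A := by
            show Sum.inr j0 ∈ insert (Sum.inr s.j) s.A
            rw [heq]; exact Finset.mem_insert_self _ _
          have hAB : Sum.inr j0 ∉ (stBuy wstar p s).A := by simp [stBuy, hA]
          have hjB : j0 < (stBuy wstar p s).j := by show j0 < s.j + 1; omega
          have hsoldB : (stBuy wstar p s).sold j0 = p s.i := by
            show Function.update s.sold s.j (p s.i) j0 = p s.i
            rw [← heq, Function.update_self]
          have hLbuy : knapUtilOf j0 v
              (knapStep n k wstar p vB (Function.update vS j0 x) m (stBuy wstar p s)) = p s.i := by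
            rw [util_step_past n k j0 wstar p vB _ v m (stBuy wstar p s) hjB, if_neg hAB, hsoldB]
          have hRbuy : knapUtilOf j0 v
              (knapStep n k wstar p vB (Function.update vS j0 v) m (stBuy wstar p s)) = p s.i := by
            rw [util_step_past n k j0 wstar p vB _ v m (stBuy wstar p s) hjB, if_neg hAB, hsoldB]
          by_cases hx2 : p s.i ≤ x
          · rw [if_pos hx2]
            refine le_trans (le_of_eq (util_step_mem n k j0 wstar p vB
              (Function.update vS j0 x) v m (stKeep wstar p s) hmemK)) ?_
            by_cases hv2 : p s.i ≤ v
            · rw [if_pos hv2]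
              exact le_of_eq (util_step_mem n k j0 wstar p vB
                (Function.update vS j0 v) v m (stKeep wstar p s) hmemK).symm
            · rw [if_neg hv2]
              by_cases hbx : p s.i ≤ vB s.i
              · rw [if_pos hbx]
                exact le_trans (le_of_lt (not_le.mp hv2)) hRbuy.ge
              · rw [if_neg hbx]
                exact knapUtil_ge_true n k j0 wstar p vB (Function.update vS j0 v) v
                  (Function.update_self _ _ _) m (stSkip s) hj hA
          · rw [if_neg hx2]
            by_cases hv2 : p s.i ≤ v
            · rw [if_pos hv2]
              have hR : knapUtilOf j0 v (knapStep n k wstar p vB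
                  (Function.update vS j0 v) m (stKeep wstar p s)) = v :=
                util_step_mem n k j0 wstar p vB _ v m (stKeep wstar p s) hmemK
              by_cases hbx : p s.i ≤ vB s.i
              · rw [if_pos hbx]
                exact le_trans (le_trans hLbuy.le hv2) hR.ge
              · rw [if_neg hbx]
                refine le_trans (knapUtil_le_bound n k j0 wstar p vB
                  (Function.update vS j0 x) v v le_rfl m (stSkip s) heq hA ?_) hR.ge
                intro i' hi hi'
                exact le_trans (hpmono s.i i' (by simp only [stSkip] at hi; omega) hi') hv2
            · rw [if_neg hv2]
              by_cases hbx : p s.i ≤ vB s.i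
              · rw [if_pos hbx, if_pos hbx]
                exact le_of_eq (hLbuy.trans hRbuy.symm)
              · rw [if_neg hbx, if_neg hbx]
                exact ih (stSkip s) hj hA
        · rw [show Function.update vS j0 x s.j = vS s.j from Function.update_of_ne heq _ _,
              show Function.update vS j0 v s.j = vS s.j from Function.update_of_ne heq _ _]
          have hjlt : s.j < j0 := lt_of_le_of_ne hj heq
          by_cases hs : p s.i ≤ vS s.j
          · rw [if_pos hs, if_pos hs]
            refine ih (stKeep wstar p s) (Nat.succ_le_of_lt hjlt) ?_
            show Sum.inr j0 ∉ insert (Sum.inr s.j) s.A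
            simp [Finset.mem_insert, hA, Ne.symm heq]
          · rw [if_neg hs, if_neg hs]
            by_cases hbx : p s.i ≤ vB s.i
            · rw [if_pos hbx, if_pos hbx]
              exact ih (stBuy wstar p s) (Nat.succ_le_of_lt hjlt) (by simp [stBuy, hA])
            · rw [if_neg hbx, if_neg hbx]
              exact ih (stSkip s) hj hA
    · rw [if_neg h1, if_neg h1]
/-- **Truthfulness for sellers in the knapsack mechanism (Algorithm 1).**
With buyers sorted so that `w_1 ≥ … ≥ w_n` and prices `p_i = (2/7) · w_i* · E[OPT]`,
fix a seller `j0`, her true value `vS j0`, and arbitrary fixed values of all other agents.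
Let `u x` be seller `j0`'s utility when she reports `x` (every comparison of her value
against an offered price uses `x`): her true value `vS j0` if she ends the mechanism
holding her item, and the sale price otherwise.  Then `u (vS j0) ≥ u x` for all `x ≥ 0`. -/
theorem knapsack_mechanism_seller_truthful
    {Ω : Type*} [MeasurableSpace Ω] (μ : Measure Ω) [IsProbabilityMeasure μ]
    (n k : ℕ) (hk : 2 ≤ k)
    (w : ℕ → ℝ) (hw0 : ∀ i, i < n → 0 ≤ w i) (hw2 : ∀ i, i < n → w i ≤ 1 / 2)
    (hsort : ∀ i j, i ≤ j → j < n → w j ≤ w i)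
    (V : ℕ ⊕ ℕ → Ω → ℝ)
    (hmeas : ∀ a, Measurable (V a)) (hint : ∀ a, Integrable (V a) μ)
    (hnonneg : ∀ a ω, 0 ≤ V a ω)
    (hindep : iIndepFun V μ)
    (wstar : ℕ → ℝ) (hwstar : ∀ i, wstar i = max (w i) (1 / (k : ℝ)))
    (EOPT : ℝ)
    (hEOPT : EOPT =
      ∫ ω, knapOPT n k w (fun i => V (Sum.inl i) ω) (fun j => V (Sum.inr j) ω) ∂μ)
    (p : ℕ → ℝ) (hp : ∀ i, p i = (2 / 7) * wstar i * EOPT)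
    -- the fixed (reported) values of all agents; `vS j0` is seller `j0`'s true value
    (vB vS : ℕ → ℝ) (hvB : ∀ i, 0 ≤ vB i) (hvS : ∀ j, 0 ≤ vS j)
    (j0 : ℕ) (hj0 : j0 < k)
    (u : ℝ → ℝ)
    (hu : ∀ x, u x =
      if Sum.inr j0 ∈ knapFinalA n k wstar p vB (Function.update vS j0 x) then vS j0
      else (knapRun n k wstar p vB (Function.update vS j0 x)).sold j0)
    (x : ℝ) (hx : 0 ≤ x) :
    u x ≤ u (vS j0) := by
  -- `EOPT ≥ 0`: `OPT(v) ≥ 0` pointwise since the empty allocation is feasible.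
  have hE : 0 ≤ EOPT := by
    rw [hEOPT]
    apply integral_nonneg
    intro ω
    simp only [Pi.zero_apply]
    unfold knapOPT
    refine le_csSup ?_ ?_
    · refine ⟨∑ a ∈ (Finset.range n).image Sum.inl ∪ (Finset.range k).image Sum.inr,
        Sum.elim (fun i => V (Sum.inl i) ω) (fun j => V (Sum.inr j) ω) a, ?_⟩
      rintro t ⟨A, hA1, hA2, hA3, rfl⟩
      refine Finset.sum_le_sum_of_subset_of_nonneg ?_ ?_
      · rintro (i | j) ha
        · have hi := hA1 _ ha
          simp only [Sum.elim_inl] at hi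
          simp [hi]
        · have hj := hA1 _ ha
          simp only [Sum.elim_inr] at hj
          simp [hj]
      · rintro (i | j) _ _
        · exact hnonneg (Sum.inl i) ω
        · exact hnonneg (Sum.inr j) ω
    · exact ⟨∅, by simp, by simp, by simp, by simp⟩
  -- prices are non-increasing in the buyer index
  have hwmono : ∀ i i', i ≤ i' → i' < n → wstar i' ≤ wstar i := by
    intro i i' hii hi'
    rw [hwstar, hwstar]
    exact max_le_max (hsort i i' hii hi') le_rfl
  have hpmono : ∀ i i', i ≤ i' → i' < n → p i' ≤ p i := by
    intro i i' hii hi'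
    rw [hp i, hp i']
    have h := hwmono i i' hii hi'
    nlinarith [mul_nonneg (sub_nonneg.mpr h) hE]
  -- seller `j0` holds an item after the mechanism iff she was allocated one in the loop
  -- or the loop never reached her
  have hiff : ∀ vS' : ℕ → ℝ, (Sum.inr j0 ∈ knapFinalA n k wstar p vB vS' ↔
      Sum.inr j0 ∈ (knapRun n k wstar p vB vS').A ∨ (knapRun n k wstar p vB vS').j ≤ j0) := by
    intro vS'
    simp [knapFinalA, Finset.mem_union, Finset.mem_image, Finset.mem_filter,
      Finset.mem_range, hj0]
  have hux : ∀ y, u y =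
      knapUtilOf j0 (vS j0) (knapRun n k wstar p vB (Function.update vS j0 y)) := by
    intro y
    rw [hu y]
    unfold knapUtilOf
    by_cases hmem : Sum.inr j0 ∈ knapFinalA n k wstar p vB (Function.update vS j0 y)
    · rw [if_pos hmem, if_pos ((hiff _).mp hmem)]
    · rw [if_neg hmem, if_neg (fun h => hmem ((hiff _).mpr h))]
  rw [hux x, hux (vS j0)]
  unfold knapRun
  exact knapUtil_main n k j0 wstar p vB vS (vS j0) x hpmono (n + k)
    { A := ∅, i := 0, j := 0, W := 0, P := fun _ => 0, sold := fun _ => 0 }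
    (Nat.zero_le _) (by simp)
end

section
/- For every valuation profile v, the set A returned by the knapsack mechanism (Algorithm 1) satisfies |A| = k (exactly k items are allocated) and the set of buyers in A satisfies the knapsack constraint ∑_{i ∈ A ∩ B} w_i ≤ ∑_{i ∈ A ∩ B} w_i* ≤ 1. -/
open Finset MeasureTheory ProbabilityTheory
open scoped Classical

/-- Invariant maintained by the while-loop of Algorithm 1. -/
def KnapInv (wstar : ℕ → ℝ) (k : ℕ) (s : KnapState) : Prop :=
  s.A.card = s.j ∧
  (∀ a ∈ s.A, Sum.elim (fun i => i < s.i) (fun j => j < s.j) a) ∧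
  (∑ a ∈ s.A, Sum.elim wstar (fun _ => (0 : ℝ)) a) ≤ s.W ∧
  s.W ≤ 1 ∧ s.j ≤ k

lemma knapInv_step (n k : ℕ) (wstar p vB vS : ℕ → ℝ) (hws : ∀ i, 0 ≤ wstar i) :
    ∀ fuel s, KnapInv wstar k s → KnapInv wstar k (knapStep n k wstar p vB vS fuel s) := by
  intro fuel
  induction fuel with
  | zero => intro s h; simpa [knapStep] using h
  | succ fuel ih =>
    intro s h
    obtain ⟨hc, hm, hs, hW, hj⟩ := h
    rw [knapStep]
    split_ifs with h1 h2 h3 h4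
    · apply ih
      refine ⟨hc, fun a ha => ?_, hs, hW, hj⟩
      rcases a with i | j
      · exact Nat.lt_succ_of_lt (hm _ ha)
      · exact hm _ ha
    · apply ih
      have hnotmem : (Sum.inr s.j : ℕ ⊕ ℕ) ∉ s.A := fun hmem =>
        lt_irrefl s.j (hm _ hmem)
      refine ⟨?_, fun a ha => ?_, ?_, ?_, h1.2⟩
      · simp [Finset.card_insert_of_notMem hnotmem, hc]
      · rcases Finset.mem_insert.mp ha with rfl | ha'
        · exact Nat.lt_succ_self _
        · rcases a with i | j
          · exact hm _ ha'
          · exact Nat.lt_succ_of_lt (hm _ ha')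
      · rw [Finset.sum_insert hnotmem]
        simpa using le_trans hs (le_add_of_nonneg_right (hws s.i))
      · exact le_of_not_gt h2
    · apply ih
      have hnotmem : (Sum.inl s.i : ℕ ⊕ ℕ) ∉ s.A := fun hmem =>
        lt_irrefl s.i (hm _ hmem)
      refine ⟨?_, fun a ha => ?_, ?_, ?_, h1.2⟩
      · simp [Finset.card_insert_of_notMem hnotmem, hc]
      · rcases Finset.mem_insert.mp ha with rfl | ha'
        · exact Nat.lt_succ_self _
        · rcases a with i | j
          · exact Nat.lt_succ_of_lt (hm _ ha')
          · exact Nat.lt_succ_of_lt (hm _ ha')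
      · rw [Finset.sum_insert hnotmem]
        simpa [add_comm] using add_le_add_left hs (wstar s.i)
      · exact le_of_not_gt h2
    · apply ih
      refine ⟨hc, fun a ha => ?_, hs, hW, hj⟩
      rcases a with i | j
      · exact Nat.lt_succ_of_lt (hm _ ha)
      · exact hm _ ha
    · exact ⟨hc, hm, hs, hW, hj⟩

/-- **Feasibility of the knapsack mechanism (Algorithm 1).**
For every valuation profile, the returned set `A` contains exactly `k` agents (exactly `k`
items are allocated), and the buyers in `A` satisfy the knapsack constraint:
`∑_{i ∈ A ∩ B} w_i ≤ ∑_{i ∈ A ∩ B} w_i* ≤ 1`. -/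
theorem knapsack_mechanism_feasible
    (n k : ℕ) (hk : 2 ≤ k)
    (w : ℕ → ℝ) (hw0 : ∀ i, i < n → 0 ≤ w i) (hw2 : ∀ i, i < n → w i ≤ 1 / 2)
    (hsort : ∀ i j, i ≤ j → j < n → w j ≤ w i)
    (wstar : ℕ → ℝ) (hwstar : ∀ i, wstar i = max (w i) (1 / (k : ℝ)))
    (p : ℕ → ℝ) (hp : ∀ i, 0 ≤ p i)
    (vB vS : ℕ → ℝ) (hvB : ∀ i, 0 ≤ vB i) (hvS : ∀ j, 0 ≤ vS j) :
    (knapFinalA n k wstar p vB vS).card = k ∧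
    (∑ a ∈ knapFinalA n k wstar p vB vS, Sum.elim w (fun _ => (0 : ℝ)) a) ≤
      (∑ a ∈ knapFinalA n k wstar p vB vS, Sum.elim wstar (fun _ => (0 : ℝ)) a) ∧
    (∑ a ∈ knapFinalA n k wstar p vB vS, Sum.elim wstar (fun _ => (0 : ℝ)) a) ≤ 1 := by
  have hkpos : (0 : ℝ) ≤ 1 / (k : ℝ) := by positivity
  have hws : ∀ i, 0 ≤ wstar i := fun i => (hwstar i) ▸ le_max_of_le_right hkpos
  have hinv : KnapInv wstar k (knapRun n k wstar p vB vS) := by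
    apply knapInv_step n k wstar p vB vS hws
    refine ⟨by simp, by simp, by simp, by norm_num, Nat.zero_le k⟩
  obtain ⟨hc, hm, hs, hW, hj⟩ := hinv
  set s := knapRun n k wstar p vB vS with hsdef
  set T := ((Finset.range k).filter (fun j' => s.j ≤ j')).image (Sum.inr : ℕ → ℕ ⊕ ℕ) with hT
  have hdisj : Disjoint s.A T := by
    rw [Finset.disjoint_left]
    intro a ha haT
    rw [hT, Finset.mem_image] at haT
    obtain ⟨j', hj', rfl⟩ := haT
    have h1 := hm _ ha
    have h2 := (Finset.mem_filter.mp hj').2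
    exact absurd h1 (not_lt.mpr h2)
  have hfin : knapFinalA n k wstar p vB vS = s.A ∪ T := rfl
  have hTcard : T.card = k - s.j := by
    rw [hT, Finset.card_image_of_injective _ Sum.inr_injective]
    have : (Finset.range k).filter (fun j' => s.j ≤ j') =
        Finset.range k \ Finset.range s.j := by
      ext x
      simp [Nat.not_lt, and_comm]
    rw [this, Finset.card_sdiff_of_subset (Finset.range_subset_range.mpr hj)]
    simp
  constructor
  · rw [hfin, Finset.card_union_of_disjoint hdisj, hc, hTcard]
    omega
  constructor
  · apply Finset.sum_le_sum
    intro a _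
    rcases a with i | j
    · simpa using (hwstar i) ▸ le_max_left (w i) (1 / (k : ℝ))
    · simp
  · rw [hfin, Finset.sum_union hdisj]
    have hT0 : (∑ a ∈ T, Sum.elim wstar (fun _ => (0 : ℝ)) a) = 0 := by
      rw [hT, Finset.sum_image (fun _ _ _ _ h => Sum.inr_injective h)]
      simp
    rw [hT0, add_zero]
    exact le_trans hs hW
end
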